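/- arXiv:2101.09047 — 2 statements merged into one kernel-verified Lean document; each statement's English description precedes it below -/
import Mathlib

section
/- For every nonnegative f : ℝ³ → ℝ, not almost-everywhere zero, with ν(1+|v|²)f integrable, there exists a unique multiplier λ = (λ₀,λ₁,λ₂) ∈ Λ = {λ₂ < 0} such that the Maxwellian M(v) = exp(m λ₀ + m λ₁·v + m λ₂|v|²) matches all weighted moments of f: ∫ ν(v)(m, m v, m|v|²) M(v) dv = ∫ ν(v)(m, m v, m|v|²) f(v) dv. Consequently, this M is the unique minimizer of g ↦ ∫ ν h(g) dv over the constraint set χ = { g ≥ 0 : ν(1+|v|²)g ∈ L¹, ∫ ν(m, mv, m|v|²)(g − f) dv = 0 }. -/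
open MeasureTheory Real Filter
open scoped Topology

noncomputable section

abbrev V3 : Type := Fin 3 → ℝ

def dot3 (a b : V3) : ℝ := ∑ i, a i * b i

def nsq (v : V3) : ℝ := ∑ i, (v i) ^ 2

abbrev L5 : Type := ℝ × V3 × ℝ

def dot5 (a b : L5) : ℝ := a.1 * b.1 + dot3 a.2.1 b.2.1 + a.2.2 * b.2.2

def aVec (m : ℝ) (v : V3) : L5 := (m, m • v, m * nsq v)

def expA (m : ℝ) (l : L5) (v : V3) : ℝ := Real.exp (dot5 l (aVec m v))

def momVec (m : ℝ) (ν g : V3 → ℝ) : L5 :=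
  (∫ v, ν v * (m * g v), fun i => ∫ v, ν v * (m * v i) * g v,
    ∫ v, ν v * (m * nsq v) * g v)

def zdual (m : ℝ) (ν : V3 → ℝ) (l ρ : L5) : ℝ :=
  (∫ v, ν v * expA m l v) - dot5 l ρ

def entH (z : ℝ) : ℝ := z * Real.log z - z

def dualCLM (ρ : L5) : L5 →L[ℝ] ℝ :=
  LinearMap.toContinuousLinearMap
    { toFun := fun δ => dot5 δ ρ
      map_add' := by
        intro a b
        simp [dot5, dot3, Prod.fst_add, Prod.snd_add, Pi.add_apply, add_mul,
          Finset.sum_add_distrib]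
        ring
      map_smul' := by
        intro c a
        simp only [dot5, dot3, Prod.smul_fst, Prod.smul_snd, Pi.smul_apply,
          smul_eq_mul, Finset.mul_sum, RingHom.id_apply]
        ring_nf
        rw [Finset.mul_sum]
        ring_nf }


/-- Membership in the constraint set χ. -/
def memChi (m : ℝ) (ν f g : V3 → ℝ) : Prop :=
  (∀ v, 0 ≤ g v) ∧
  Integrable (fun v => ν v * (1 + nsq v) * g v) ∧
  (∫ v, ν v * (m * (g v - f v))) = 0 ∧
  (∀ i : Fin 3, (∫ v, ν v * (m * v i * (g v - f v))) = 0) ∧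
  (∫ v, ν v * (m * nsq v * (g v - f v))) = 0

/-- The ν-weighted moments of the Maxwellian `exp_λ` match those of `f`. -/
def momentMatch (m : ℝ) (ν f : V3 → ℝ) (l : L5) : Prop :=
  (∫ v, ν v * (m * expA m l v)) = (∫ v, ν v * (m * f v)) ∧
  (∀ i : Fin 3, (∫ v, ν v * (m * v i * expA m l v)) = (∫ v, ν v * (m * v i * f v))) ∧
  (∫ v, ν v * (m * nsq v * expA m l v)) = (∫ v, ν v * (m * nsq v * f v))

namespace BGK

lemma nsq_nonneg (v : V3) : 0 ≤ nsq v := Finset.sum_nonneg fun i _ => sq_nonneg _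

lemma sq_le_nsq (v : V3) (i : Fin 3) : (v i)^2 ≤ nsq v :=
  Finset.single_le_sum (fun j _ => sq_nonneg (v j)) (Finset.mem_univ i)

lemma abs_apply_le (v : V3) (i : Fin 3) : |v i| ≤ 1 + nsq v := by
  have h1 : |v i| ≤ 1 + (v i)^2 := by nlinarith [sq_nonneg (|v i| - 1), abs_nonneg (v i), sq_abs (v i)]
  have := sq_le_nsq v i
  linarith

lemma nsq_expand (v : V3) : nsq v = v 0 ^ 2 + v 1 ^ 2 + v 2 ^ 2 := by
  simp [nsq, Fin.sum_univ_three]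

lemma dot3_expand (a v : V3) : dot3 a v = a 0 * v 0 + a 1 * v 1 + a 2 * v 2 := by
  simp [dot3, Fin.sum_univ_three]

lemma dot5_aVec (m : ℝ) (l : L5) (v : V3) :
    dot5 l (aVec m v) = m * (l.1 + dot3 l.2.1 v + l.2.2 * nsq v) := by
  simp only [dot5, aVec, dot3_expand, Pi.smul_apply, smul_eq_mul]
  ring

lemma dot5_add_left (a b c : L5) : dot5 (a + b) c = dot5 a c + dot5 b c := by
  simp only [dot5, dot3_expand, Prod.fst_add, Prod.snd_add, Pi.add_apply]
  ring

lemma dot5_smul_left (t : ℝ) (a c : L5) : dot5 (t • a) c = t * dot5 a c := by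
  simp only [dot5, dot3_expand, Prod.smul_fst, Prod.smul_snd, Pi.smul_apply, smul_eq_mul]
  ring

lemma dot5_sub_left (a b c : L5) : dot5 (a - b) c = dot5 a c - dot5 b c := by
  simp only [dot5, dot3_expand, Prod.fst_sub, Prod.snd_sub, Pi.sub_apply]
  ring

lemma abs_dot5_aVec_le (m : ℝ) (hm : 0 ≤ m) (l : L5) (v : V3) :
    |dot5 l (aVec m v)| ≤ (m * (|l.1| + (∑ i, |l.2.1 i|) + |l.2.2|)) * (1 + nsq v) := by
  rw [dot5_aVec, abs_mul, abs_of_nonneg hm, mul_assoc]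
  apply mul_le_mul_of_nonneg_left _ hm
  have h1 : |dot3 l.2.1 v| ≤ (∑ i, |l.2.1 i|) * (1 + nsq v) := by
    rw [dot3, Finset.sum_mul]
    refine (Finset.abs_sum_le_sum_abs _ _).trans (Finset.sum_le_sum fun i _ => ?_)
    rw [abs_mul]
    exact mul_le_mul_of_nonneg_left (abs_apply_le v i) (abs_nonneg _)
  have h2 : |l.2.2 * nsq v| ≤ |l.2.2| * (1 + nsq v) := by
    rw [abs_mul]
    refine mul_le_mul_of_nonneg_left ?_ (abs_nonneg _)
    rw [abs_of_nonneg (nsq_nonneg v)]; linarith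
  have h0 : |l.1| ≤ |l.1| * (1 + nsq v) := by
    nlinarith [abs_nonneg l.1, nsq_nonneg v]
  calc |l.1 + dot3 l.2.1 v + l.2.2 * nsq v| ≤ |l.1| + |dot3 l.2.1 v| + |l.2.2 * nsq v| :=
        (abs_add_le _ _).trans (by gcongr; exact abs_add_le _ _)
    _ ≤ (|l.1| + (∑ i, |l.2.1 i|) + |l.2.2|) * (1 + nsq v) := by
        rw [add_mul, add_mul]; gcongr <;> linarith [h0, h1, h2]

lemma continuous_nsq : Continuous nsq := by
  unfold nsq; exact continuous_finset_sum _ fun i _ => (continuous_apply i).pow 2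

lemma continuous_dot5_aVec (m : ℝ) (l : L5) : Continuous fun v => dot5 l (aVec m v) := by
  simp only [dot5_aVec]
  apply Continuous.mul continuous_const
  refine ((continuous_const.add ?_).add (continuous_const.mul continuous_nsq))
  unfold dot3
  exact continuous_finset_sum _ fun i _ => continuous_const.mul (continuous_apply i)

lemma continuous_expA (m : ℝ) (l : L5) : Continuous (expA m l) :=
  Real.continuous_exp.comp (continuous_dot5_aVec m l)

lemma expA_pos (m : ℝ) (l : L5) (v : V3) : 0 < expA m l v := Real.exp_pos _

end BGK

namespace BGK

lemma dualCLM_apply (c x : L5) : dualCLM c x = dot5 x c := rfl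

/-- master integrability lemma: ν * G * g with |G| ≤ C(1+nsq), g ≥ 0 weighted-integrable -/
lemma integrable_weight {ν : V3 → ℝ} (hν : Measurable ν) (hν0 : ∀ v, 0 ≤ ν v)
    {g : V3 → ℝ} (hg : AEStronglyMeasurable g volume) (hg0 : ∀ v, 0 ≤ g v)
    (hgi : Integrable (fun v => ν v * (1 + nsq v) * g v))
    {G : V3 → ℝ} (hG : AEStronglyMeasurable G volume) {C : ℝ}
    (hGb : ∀ v, |G v| ≤ C * (1 + nsq v)) :
    Integrable (fun v => ν v * G v * g v) := by
  refine Integrable.mono' (hgi.const_mul C) ((hν.aestronglyMeasurable.mul hG).mul hg) ?_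
  refine Filter.Eventually.of_forall fun v => ?_
  have h1 : 0 ≤ 1 + nsq v := by linarith [nsq_nonneg v]
  calc ‖ν v * G v * g v‖ = ν v * |G v| * g v := by
        rw [norm_eq_abs, abs_mul, abs_mul, abs_of_nonneg (hν0 v), abs_of_nonneg (hg0 v)]
    _ ≤ ν v * (C * (1 + nsq v)) * g v := by
        apply mul_le_mul_of_nonneg_right _ (hg0 v)
        exact mul_le_mul_of_nonneg_left (hGb v) (hν0 v)
    _ = C * (ν v * (1 + nsq v) * g v) := by ring

lemma aesm_of_weighted {ν : V3 → ℝ} (hν : Measurable ν) (hνpos : ∀ v, 0 < ν v)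
    {g : V3 → ℝ} (hgi : Integrable (fun v => ν v * (1 + nsq v) * g v)) :
    AEStronglyMeasurable g volume := by
  have h : g = fun v => (ν v * (1 + nsq v) * g v) * (ν v * (1 + nsq v))⁻¹ := by
    funext v
    have hne : ν v * (1 + nsq v) ≠ 0 := by
      have := hνpos v; have := nsq_nonneg v; positivity
    field_simp
    rw [mul_assoc, mul_div_assoc, div_self hne, mul_one]
  rw [h]
  exact hgi.aestronglyMeasurable.mul
    ((hν.mul (continuous_const.add continuous_nsq).measurable).inv.aestronglyMeasurable)

/-- dot5 of a moment vector is the integral of the weighted dot5. -/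
lemma dot5_momVec {m : ℝ} (hm : 0 < m) {ν : V3 → ℝ} (hν : Measurable ν) (hν0 : ∀ v, 0 ≤ ν v)
    {g : V3 → ℝ} (hg : AEStronglyMeasurable g volume) (hg0 : ∀ v, 0 ≤ g v)
    (hgi : Integrable (fun v => ν v * (1 + nsq v) * g v)) (δ : L5) :
    dot5 δ (momVec m ν g) = ∫ v, ν v * (dot5 δ (aVec m v) * g v) := by
  have hmb : ∀ v, |(m : ℝ)| ≤ m * (1 + nsq v) := fun v => by
    rw [abs_of_nonneg hm.le]; nlinarith [nsq_nonneg v]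
  have hintc : Integrable (fun v => ν v * m * g v) :=
    integrable_weight hν hν0 hg hg0 hgi aestronglyMeasurable_const hmb
  have hinti : ∀ i : Fin 3, Integrable (fun v => ν v * (m * v i) * g v) := by
    intro i
    refine integrable_weight hν hν0 hg hg0 hgi
      ((continuous_const.mul (continuous_apply i)).aestronglyMeasurable) (C := m) fun v => ?_
    rw [abs_mul, abs_of_nonneg hm.le]
    exact mul_le_mul_of_nonneg_left (abs_apply_le v i) hm.le
  have hintq : Integrable (fun v => ν v * (m * nsq v) * g v) := by
    refine integrable_weight hν hν0 hg hg0 hgi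
      ((continuous_const.mul continuous_nsq).aestronglyMeasurable) (C := m) fun v => ?_
    rw [abs_mul, abs_of_nonneg hm.le, abs_of_nonneg (nsq_nonneg v)]
    nlinarith [nsq_nonneg v]
  have key : (fun v => ν v * (dot5 δ (aVec m v) * g v)) = fun v =>
      δ.1 * (ν v * m * g v) + ((δ.2.1 0) * (ν v * (m * v 0) * g v)
        + (δ.2.1 1) * (ν v * (m * v 1) * g v) + (δ.2.1 2) * (ν v * (m * v 2) * g v))
        + δ.2.2 * (ν v * (m * nsq v) * g v) := by
    funext v
    rw [dot5_aVec, dot3_expand]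
    ring
  have hA : Integrable (fun v => δ.1 * (ν v * m * g v)) volume := hintc.const_mul _
  have hB0 : Integrable (fun v => δ.2.1 0 * (ν v * (m * v 0) * g v)) volume := (hinti 0).const_mul _
  have hB1 : Integrable (fun v => δ.2.1 1 * (ν v * (m * v 1) * g v)) volume := (hinti 1).const_mul _
  have hB2 : Integrable (fun v => δ.2.1 2 * (ν v * (m * v 2) * g v)) volume := (hinti 2).const_mul _
  have hC : Integrable (fun v => δ.2.2 * (ν v * (m * nsq v) * g v)) volume := hintq.const_mul _
  have hB01 : Integrable (fun v => δ.2.1 0 * (ν v * (m * v 0) * g v)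
      + δ.2.1 1 * (ν v * (m * v 1) * g v)) volume := hB0.add hB1
  have hB : Integrable (fun v => δ.2.1 0 * (ν v * (m * v 0) * g v)
      + δ.2.1 1 * (ν v * (m * v 1) * g v) + δ.2.1 2 * (ν v * (m * v 2) * g v)) volume := hB01.add hB2
  have hAB : Integrable (fun v => δ.1 * (ν v * m * g v) + (δ.2.1 0 * (ν v * (m * v 0) * g v)
      + δ.2.1 1 * (ν v * (m * v 1) * g v) + δ.2.1 2 * (ν v * (m * v 2) * g v))) volume := hA.add hB
  rw [key, integral_add hAB hC, integral_add hA hB, integral_add hB01 hB2, integral_add hB0 hB1,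
    integral_const_mul _ _, integral_const_mul _ _, integral_const_mul _ _, integral_const_mul _ _,
    integral_const_mul _ _]
  simp only [dot5, momVec, dot3_expand]
  have e1 : ∫ v, ν v * m * g v = ∫ v, ν v * (m * g v) := by
    congr 1; funext v; ring
  rw [e1]

end BGK

namespace BGK

lemma integral_eq_of_sub_zero {A B : V3 → ℝ} (hA : Integrable A) (hB : Integrable B)
    (h : (∫ v, A v - B v) = 0) : (∫ v, A v) = (∫ v, B v) := by
  rw [integral_sub hA hB] at h; linarith

lemma dot5_e0 (m : ℝ) (v : V3) : dot5 ((1 : ℝ), (0 : V3), (0 : ℝ)) (aVec m v) = m := by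
  simp [dot5, aVec, dot3]

lemma dot5_ei (m : ℝ) (v : V3) (i : Fin 3) :
    dot5 ((0 : ℝ), Pi.single i (1 : ℝ), (0 : ℝ)) (aVec m v) = m * v i := by
  fin_cases i <;>
    simp [dot5, aVec, dot3_expand, Pi.single_apply] <;> ring

lemma dot5_e4 (m : ℝ) (v : V3) : dot5 ((0 : ℝ), (0 : V3), (1 : ℝ)) (aVec m v) = m * nsq v := by
  simp [dot5, aVec, dot3]

lemma momVec_eq_of_match {m : ℝ} {ν f : V3 → ℝ} {l : L5} (h : momentMatch m ν f l) :
    momVec m ν (expA m l) = momVec m ν f := by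
  obtain ⟨h1, h2, h3⟩ := h
  unfold momVec
  refine Prod.ext ?_ (Prod.ext ?_ ?_)
  · exact h1
  · funext i
    show (∫ v, ν v * (m * v i) * expA m l v) = ∫ v, ν v * (m * v i) * f v
    have e : ∀ h : V3 → ℝ, (∫ v, ν v * (m * v i) * h v) = ∫ v, ν v * (m * v i * h v) :=
      fun h => by congr 1; funext v; ring
    exact (e (expA m l)).trans ((h2 i).trans (e f).symm)
  · show (∫ v, ν v * (m * nsq v) * expA m l v) = ∫ v, ν v * (m * nsq v) * f v
    have e : ∀ h : V3 → ℝ, (∫ v, ν v * (m * nsq v) * h v) = ∫ v, ν v * (m * nsq v * h v) :=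
      fun h => by congr 1; funext v; ring
    exact (e (expA m l)).trans (h3.trans (e f).symm)

lemma momentMatch_of_forall {m : ℝ} {ν f : V3 → ℝ} {l : L5}
    (E : ∀ δ : L5, (∫ v, ν v * (dot5 δ (aVec m v) * expA m l v))
      = ∫ v, ν v * (dot5 δ (aVec m v) * f v)) :
    momentMatch m ν f l := by
  refine ⟨?_, fun i => ?_, ?_⟩
  · have := E ((1 : ℝ), (0 : V3), (0 : ℝ))
    simp only [dot5_e0] at this
    exact this
  · have := E ((0 : ℝ), Pi.single i (1 : ℝ), (0 : ℝ))
    simp only [dot5_ei] at this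
    exact this
  · have := E ((0 : ℝ), (0 : V3), (1 : ℝ))
    simp only [dot5_e4] at this
    exact this

/-- pointwise entropy inequality for `h(z) = z log z - z`. -/
lemma entH_ge {w z : ℝ} (hw : 0 < w) (hz : 0 ≤ z) :
    Real.log w * (z - w) ≤ entH z - entH w := by
  rcases hz.eq_or_lt with h0 | hzpos
  · simp only [entH, ← h0]
    simp [Real.log_zero]
    nlinarith
  · have key : Real.log w - Real.log z ≤ w / z - 1 := by
      have := Real.log_le_sub_one_of_pos (div_pos hw hzpos)
      rwa [Real.log_div hw.ne' hzpos.ne'] at this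
    have h3 : z * (w / z) = w := by field_simp
    have key2 : z * (Real.log w - Real.log z) ≤ w - z := by
      nlinarith [mul_le_mul_of_nonneg_left key hzpos.le, h3]
    simp only [entH]; nlinarith

lemma entH_eq_iff {w z : ℝ} (hw : 0 < w) (hz : 0 ≤ z)
    (h : entH z - entH w = Real.log w * (z - w)) : z = w := by
  rcases hz.eq_or_lt with h0 | hzpos
  · exfalso
    simp only [entH, ← h0] at h
    simp [Real.log_zero] at h
    nlinarith
  · by_contra hne
    have hr : w / z ≠ 1 := by
      intro hc
      exact hne ((div_eq_one_iff_eq hzpos.ne').mp hc).symm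
    have key : Real.log w - Real.log z < w / z - 1 := by
      have := Real.log_lt_sub_one_of_pos (div_pos hw hzpos) hr
      rwa [Real.log_div hw.ne' hzpos.ne'] at this
    have h3 : z * (w / z) = w := by field_simp
    have key2 : z * (Real.log w - Real.log z) < w - z := by
      nlinarith [(mul_lt_mul_iff_right₀ hzpos).mpr key, h3]
    simp only [entH] at h
    nlinarith

lemma exp_mono_mul_nonneg (x y : ℝ) : 0 ≤ (x - y) * (Real.exp x - Real.exp y) := by
  rcases le_total x y with h | h
  · have := Real.exp_le_exp.mpr h
    nlinarith
  · have := Real.exp_le_exp.mpr h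
    nlinarith

lemma eq_of_exp_mono_mul_eq_zero {x y : ℝ} (h : (x - y) * (Real.exp x - Real.exp y) = 0) :
    x = y := by
  by_contra hne
  rcases lt_or_gt_of_ne hne with hlt | hlt
  · have := Real.exp_lt_exp.mpr hlt
    nlinarith
  · have := Real.exp_lt_exp.mpr hlt
    nlinarith

lemma integral_expA_pos {m : ℝ} {ν : V3 → ℝ} (hνpos : ∀ v, 0 < ν v) {l : L5}
    (hint : Integrable (fun v => ν v * expA m l v)) :
    0 < ∫ v, ν v * expA m l v := by
  rw [integral_pos_iff_support_of_nonneg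
    (fun v => le_of_lt (mul_pos (hνpos v) (expA_pos m l v))) hint]
  have : Function.support (fun v => ν v * expA m l v) = Set.univ := by
    ext v; simp only [Function.mem_support, Set.mem_univ, iff_true]
    exact (mul_pos (hνpos v) (expA_pos m l v)).ne'
  rw [this]
  exact MeasureTheory.Measure.measure_univ_pos.mpr (NeZero.ne _)

end BGK

namespace BGK

lemma volume_nsq_eq_zero (r : ℝ) : volume {u : V3 | nsq u = r} = 0 := by
  have e := EuclideanSpace.volume_preserving_symm_measurableEquiv_toLp (Fin 3)
  have hmeas : MeasurableSet {u : V3 | nsq u = r} :=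
    continuous_nsq.measurable (measurableSet_singleton r)
  rw [← e.measure_preimage hmeas.nullMeasurableSet]
  have hset : (MeasurableEquiv.toLp 2 (Fin 3 → ℝ)).symm ⁻¹' {u : V3 | nsq u = r}
      = {x : EuclideanSpace ℝ (Fin 3) | ‖x‖ ^ 2 = r} := by
    ext x
    simp only [Set.mem_preimage, Set.mem_setOf_eq]
    have hx : nsq ((MeasurableEquiv.toLp 2 (Fin 3 → ℝ)).symm x) = ∑ i, (x i) ^ 2 := rfl
    rw [hx, EuclideanSpace.norm_eq, Real.sq_sqrt (by positivity)]
    simp [sq_abs]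
  rw [hset]
  rcases lt_or_ge r 0 with hr | hr
  · have : {x : EuclideanSpace ℝ (Fin 3) | ‖x‖ ^ 2 = r} = ∅ := by
      ext x; simp only [Set.mem_setOf_eq, Set.mem_empty_iff_false, iff_false]
      intro h; nlinarith [norm_nonneg x, sq_nonneg ‖x‖]
    rw [this]; exact measure_empty
  · have : {x : EuclideanSpace ℝ (Fin 3) | ‖x‖ ^ 2 = r} = Metric.sphere 0 (Real.sqrt r) := by
      ext x
      simp only [Set.mem_setOf_eq, mem_sphere_zero_iff_norm]
      constructor
      · intro h; rw [← h, Real.sqrt_sq (norm_nonneg x)]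
      · intro h; rw [h, Real.sq_sqrt hr]
    rw [this]
    exact MeasureTheory.Measure.addHaar_sphere volume 0 _

lemma null_zero_set (δ : L5) (hδ : δ ≠ 0) :
    volume {v : V3 | δ.1 + dot3 δ.2.1 v + δ.2.2 * nsq v = 0} = 0 := by
  by_cases hd : δ.2.2 = 0
  · by_cases hb : δ.2.1 = 0
    · have hδ1 : δ.1 ≠ 0 := by
        intro h1
        exact hδ (by rw [Prod.ext_iff, Prod.ext_iff]; exact ⟨h1, hb, hd⟩)
      have : {v : V3 | δ.1 + dot3 δ.2.1 v + δ.2.2 * nsq v = 0} = ∅ := by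
        ext v
        simp only [Set.mem_setOf_eq, Set.mem_empty_iff_false, iff_false, hb, hd, dot3_expand]
        simp [hδ1]
      rw [this]; exact measure_empty
    · -- hyperplane
      set L : V3 →ₗ[ℝ] ℝ :=
        { toFun := fun v => dot3 δ.2.1 v
          map_add' := by intro a b; simp [dot3_expand]; ring
          map_smul' := by intro c a; simp [dot3_expand]; ring } with hL
      obtain ⟨i, hi⟩ : ∃ i, δ.2.1 i ≠ 0 := Function.ne_iff.mp hb
      have hLu : L (Pi.single i (1:ℝ)) = δ.2.1 i := by
        show dot3 δ.2.1 (Pi.single i (1:ℝ)) = δ.2.1 i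
        fin_cases i <;> simp [dot3_expand, Pi.single_apply] <;> norm_num
      have hsetEq : {v : V3 | δ.1 + dot3 δ.2.1 v + δ.2.2 * nsq v = 0}
          = {v : V3 | L v = -δ.1} := by
        ext v; simp only [Set.mem_setOf_eq, hd]
        constructor
        · intro h; show dot3 δ.2.1 v = -δ.1; linarith [h]
        · intro h; have : dot3 δ.2.1 v = -δ.1 := h; linarith
      rw [hsetEq]
      rcases Set.eq_empty_or_nonempty {v : V3 | L v = -δ.1} with hZ | ⟨p, hp⟩
      · rw [hZ]; exact measure_empty
      · have hp' : L p = -δ.1 := hp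
        have hZA : {v : V3 | L v = -δ.1} = (AffineSubspace.mk' p (LinearMap.ker L) : Set V3) := by
          ext x
          simp only [Set.mem_setOf_eq, SetLike.mem_coe, AffineSubspace.mem_mk',
            LinearMap.mem_ker, vsub_eq_sub, map_sub]
          constructor
          · intro h; rw [h, hp']; ring
          · intro h; have h2 : L x - L p = 0 := h; rw [hp'] at h2; linarith
        rw [hZA]
        refine MeasureTheory.Measure.addHaar_affineSubspace volume _ ?_
        intro htop
        have hmem : p + Pi.single i (1:ℝ) ∈ AffineSubspace.mk' p (LinearMap.ker L) := by
          rw [htop]; trivial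
        have h0 : L (p + Pi.single i (1:ℝ) - p) = 0 := by
          have := AffineSubspace.mem_mk'.mp hmem
          simpa [vsub_eq_sub] using this
        rw [add_sub_cancel_left, hLu] at h0
        exact hi h0
  · -- quadratic: complete the square
    set d := δ.2.2
    set w : V3 := fun i => δ.2.1 i / (2 * d) with hw
    set r : ℝ := nsq w - δ.1 / d with hr
    have key : ∀ v, δ.1 + dot3 δ.2.1 v + d * nsq v = d * (nsq (v + w) - r) := by
      intro v
      simp only [nsq_expand, dot3_expand, Pi.add_apply, hr, hw]
      field_simp
      ring
    have hsetEq : {v : V3 | δ.1 + dot3 δ.2.1 v + δ.2.2 * nsq v = 0}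
        = (fun v : V3 => v + w) ⁻¹' {u : V3 | nsq u = r} := by
      ext v
      simp only [Set.mem_setOf_eq, Set.mem_preimage, Set.mem_setOf_eq]
      rw [key v]
      constructor
      · intro h
        rcases mul_eq_zero.mp h with h' | h'
        · exact absurd h' hd
        · linarith
      · intro h; rw [h]; ring
    rw [hsetEq, measure_preimage_add_right volume w _]
    exact volume_nsq_eq_zero r

end BGK

namespace BGK

lemma comp1_le (x : L5) : |x.1| ≤ ‖x‖ := norm_fst_le x

lemma comp2_le (x : L5) (i : Fin 3) : |x.2.1 i| ≤ ‖x‖ :=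
  le_trans (norm_le_pi_norm x.2.1 i) (le_trans (norm_fst_le x.2) (norm_snd_le x))

lemma comp3_le (x : L5) : |x.2.2| ≤ ‖x‖ :=
  le_trans (norm_snd_le x.2) (norm_snd_le x)

lemma opNorm_dualCLM_aVec {m : ℝ} (hm : 0 < m) (v : V3) :
    ‖dualCLM (aVec m v)‖ ≤ 5 * m * (1 + nsq v) := by
  have h1n : (0:ℝ) ≤ 1 + nsq v := by linarith [nsq_nonneg v]
  refine ContinuousLinearMap.opNorm_le_bound _ (by positivity) fun x => ?_
  have e1 : ‖(dualCLM (aVec m v)) x‖ = |dot5 x (aVec m v)| := by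
    rw [dualCLM_apply, Real.norm_eq_abs]
  rw [e1]
  have hA : |x.1| + (∑ i, |x.2.1 i|) + |x.2.2| ≤ 5 * ‖x‖ := by
    rw [Fin.sum_univ_three]
    linarith [comp1_le x, comp2_le x 0, comp2_le x 1, comp2_le x 2, comp3_le x]
  calc |dot5 x (aVec m v)| ≤ (m * (|x.1| + (∑ i, |x.2.1 i|) + |x.2.2|)) * (1 + nsq v) :=
        abs_dot5_aVec_le m hm.le x v
    _ = (m * (1 + nsq v)) * (|x.1| + (∑ i, |x.2.1 i|) + |x.2.2|) := by ring
    _ ≤ (m * (1 + nsq v)) * (5 * ‖x‖) := by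
        exact mul_le_mul_of_nonneg_left hA (by positivity)
    _ = 5 * m * (1 + nsq v) * ‖x‖ := by ring

lemma dot5_add_right (a b c : L5) : dot5 c (a + b) = dot5 c a + dot5 c b := by
  simp only [dot5, dot3_expand, Prod.fst_add, Prod.snd_add, Pi.add_apply]; ring

lemma dot5_smul_right (t : ℝ) (a c : L5) : dot5 c (t • a) = t * dot5 c a := by
  simp only [dot5, dot3_expand, Prod.smul_fst, Prod.smul_snd, Pi.smul_apply, smul_eq_mul]; ring

lemma continuous_dualCLM : Continuous (dualCLM : L5 → L5 →L[ℝ] ℝ) := by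
  have : IsLinearMap ℝ (dualCLM : L5 → L5 →L[ℝ] ℝ) := by
    constructor
    · intro a b
      refine ContinuousLinearMap.ext fun δ => ?_
      show dot5 δ (a + b) = dot5 δ a + dot5 δ b
      exact dot5_add_right a b δ
    · intro t a
      refine ContinuousLinearMap.ext fun δ => ?_
      show dot5 δ (t • a) = t * dot5 δ a
      exact dot5_smul_right t a δ
  exact (this.mk' _).continuous_of_finiteDimensional

lemma continuous_aVec (m : ℝ) : Continuous (aVec m) := by
  unfold aVec
  exact continuous_const.prodMk ((continuous_id.const_smul m).prodMk
    (continuous_const.mul continuous_nsq))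

lemma amgm (ε c x : ℝ) (hε : 0 < ε) : c * x ≤ c ^ 2 / (4 * ε) + ε * x ^ 2 := by
  have h2 : c * x * (4 * ε) ≤ c ^ 2 + ε * x ^ 2 * (4 * ε) := by
    nlinarith [sq_nonneg (c - 2 * ε * x)]
  have h3 : c * x = c * x * (4 * ε) / (4 * ε) := by field_simp
  rw [h3]
  calc c * x * (4 * ε) / (4 * ε) ≤ (c ^ 2 + ε * x ^ 2 * (4 * ε)) / (4 * ε) := by gcongr
    _ = c ^ 2 / (4 * ε) + ε * x ^ 2 := by field_simp

lemma exponent_bound {m : ℝ} (hm : 0 < m) (l : L5) (hl : l.2.2 < 0) :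
    ∃ ε > 0, ∃ l'' : L5, l''.2.2 < 0 ∧
      ∀ l' ∈ Metric.ball l ε, ∀ v, dot5 l' (aVec m v) ≤ dot5 l'' (aVec m v) := by
  set ε : ℝ := -l.2.2 / 8 with hε
  have hεpos : 0 < ε := by simp only [hε]; linarith
  set K : ℝ := (∑ i, (|l.2.1 i| + ε) ^ 2 / (4 * ε)) with hK
  refine ⟨ε, hεpos, ((|l.1| + ε + K), (0 : V3), l.2.2 + 2 * ε),
    (by show l.2.2 + 2 * ε < 0; simp only [hε]; linarith), ?_⟩
  intro l' hl' v
  rw [dot5_aVec, dot5_aVec]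
  apply mul_le_mul_of_nonneg_left _ hm.le
  have hnn := nsq_nonneg v
  have hdist : ‖l' - l‖ < ε := by
    rw [← dist_eq_norm]; exact hl'
  have hc1 : |l'.1 - l.1| ≤ ε := by
    have := comp1_le (l' - l); rw [Prod.fst_sub] at this; linarith [this.trans hdist.le]
  have hc2 : ∀ i, |l'.2.1 i - l.2.1 i| ≤ ε := by
    intro i
    have := comp2_le (l' - l) i
    rw [Prod.snd_sub, Prod.fst_sub, Pi.sub_apply] at this
    linarith [this.trans hdist.le]
  have hc3 : |l'.2.2 - l.2.2| ≤ ε := by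
    have := comp3_le (l' - l); rw [Prod.snd_sub, Prod.snd_sub] at this
    linarith [this.trans hdist.le]
  have hdot : dot3 l'.2.1 v ≤ K + ε * nsq v := by
    rw [dot3_expand, hK, Fin.sum_univ_three, nsq_expand]
    have hstep : ∀ i : Fin 3, l'.2.1 i * v i ≤ (|l.2.1 i| + ε) ^ 2 / (4 * ε) + ε * (v i) ^ 2 := by
      intro i
      have h1 : l'.2.1 i * v i ≤ |l'.2.1 i| * |v i| := by
        rw [← abs_mul]; exact le_abs_self _
      have h2 : |l'.2.1 i| ≤ |l.2.1 i| + ε := by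
        have := abs_sub_abs_le_abs_sub (l'.2.1 i) (l.2.1 i)
        linarith [hc2 i]
      have h3 : |l'.2.1 i| * |v i| ≤ (|l.2.1 i| + ε) * |v i| :=
        mul_le_mul_of_nonneg_right h2 (abs_nonneg _)
      have h4 := amgm ε (|l.2.1 i| + ε) (|v i|) hεpos
      rw [sq_abs] at h4
      linarith
    linarith [hstep 0, hstep 1, hstep 2]
  have hl1 : l'.1 ≤ |l.1| + ε := by
    have := abs_sub_abs_le_abs_sub l'.1 l.1
    have h5 := le_abs_self l'.1
    linarith [hc1]
  have hl3 : l'.2.2 * nsq v ≤ (l.2.2 + ε) * nsq v := by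
    apply mul_le_mul_of_nonneg_right _ hnn
    have := le_abs_self (l'.2.2 - l.2.2)
    linarith [hc3]
  have hz : dot3 (0 : V3) v = 0 := by simp [dot3_expand]
  rw [hz]
  simp only []
  linarith [hdot, hl1, hl3]

lemma hasFDerivAt_int_exp {m : ℝ} (hm : 0 < m) {ν : V3 → ℝ} (hν : Measurable ν)
    (hνpos : ∀ v, 0 < ν v)
    (hass2 : ∀ l : L5, l.2.2 < 0 → Integrable (fun v => ν v * (1 + nsq v) * expA m l v))
    (l : L5) (hl : l.2.2 < 0) (hint : Integrable (fun v => ν v * expA m l v)) :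
    Integrable (fun v => (ν v * expA m l v) • dualCLM (aVec m v)) ∧
    HasFDerivAt (fun l' => ∫ v, ν v * expA m l' v)
      (∫ v, (ν v * expA m l v) • dualCLM (aVec m v)) l := by
  obtain ⟨ε, hεpos, l'', hl'', hbd⟩ := exponent_bound hm l hl
  have hboundInt : Integrable (fun v => ν v * (5 * m * (1 + nsq v)) * expA m l'' v) := by
    refine integrable_weight hν (fun v => (hνpos v).le) (continuous_expA m l'').aestronglyMeasurable
      (fun v => (expA_pos m l'' v).le) (hass2 l'' hl'')
      ((continuous_const.mul (continuous_const.add continuous_nsq)).aestronglyMeasurable)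
      (C := 5 * m) fun v => ?_
    have h1n : (0:ℝ) ≤ 1 + nsq v := by linarith [nsq_nonneg v]
    rw [abs_of_nonneg (mul_nonneg (by linarith : (0:ℝ) ≤ 5 * m) h1n)]
  refine hasFDerivAt_integral_of_dominated_loc_of_lip (Metric.ball_mem_nhds l hεpos) ?_ hint ?_ ?_ hboundInt ?_
  · exact Filter.Eventually.of_forall fun l' =>
      (hν.aestronglyMeasurable.mul (continuous_expA m l').aestronglyMeasurable)
  · exact (hν.aestronglyMeasurable.mul
      (continuous_expA m l).aestronglyMeasurable).smul
      (continuous_dualCLM.comp (continuous_aVec m)).aestronglyMeasurable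
  · refine Filter.Eventually.of_forall fun v => ?_
    refine Convex.lipschitzOnWith_of_nnnorm_hasFDerivWithin_le
      (f' := fun l' => (ν v * expA m l' v) • dualCLM (aVec m v)) ?_ ?_ (convex_ball l ε)
    · intro x _
      have h1 : HasFDerivAt (fun l' : L5 => dot5 l' (aVec m v)) (dualCLM (aVec m v)) x :=
        (dualCLM (aVec m v)).hasFDerivAt
      have h2 := h1.exp
      have h3 := h2.const_mul (ν v)
      have : (ν v) • (Real.exp (dot5 x (aVec m v)) • dualCLM (aVec m v))
          = (ν v * expA m x v) • dualCLM (aVec m v) := by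
        rw [smul_smul]; rfl
      rw [this] at h3
      exact h3.hasFDerivWithinAt
    · intro x hx
      rw [← NNReal.coe_le_coe, coe_nnnorm, Real.coe_nnabs]
      have h5 : (0:ℝ) ≤ 5 * m * (1 + nsq v) := by nlinarith [nsq_nonneg v, hm.le]
      have hb : (0:ℝ) ≤ ν v * (5 * m * (1 + nsq v)) * expA m l'' v :=
        mul_nonneg (mul_nonneg (hνpos v).le h5) (expA_pos m l'' v).le
      rw [abs_of_nonneg hb, norm_smul, Real.norm_eq_abs,
        abs_of_nonneg (mul_nonneg (hνpos v).le (expA_pos m x v).le)]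
      have hexp : expA m x v ≤ expA m l'' v := Real.exp_le_exp.mpr (hbd x hx v)
      calc ν v * expA m x v * ‖dualCLM (aVec m v)‖
          ≤ ν v * expA m l'' v * (5 * m * (1 + nsq v)) := by
            apply mul_le_mul (by apply mul_le_mul_of_nonneg_left hexp (hνpos v).le)
              (opNorm_dualCLM_aVec hm v) (norm_nonneg _)
            exact mul_nonneg (hνpos v).le (expA_pos m l'' v).le
        _ = ν v * (5 * m * (1 + nsq v)) * expA m l'' v := by ring
  · refine Filter.Eventually.of_forall fun v => ?_
    have h1 : HasFDerivAt (fun l' : L5 => dot5 l' (aVec m v)) (dualCLM (aVec m v)) l :=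
      (dualCLM (aVec m v)).hasFDerivAt
    have h3 := h1.exp.const_mul (ν v)
    have : (ν v) • (Real.exp (dot5 l (aVec m v)) • dualCLM (aVec m v))
        = (ν v * expA m l v) • dualCLM (aVec m v) := by
      rw [smul_smul]; rfl
    rw [this] at h3
    exact h3

end BGK

namespace BGK

lemma sublevel_closed {m : ℝ} {ν : V3 → ℝ} (hν : Measurable ν) (hνpos : ∀ v, 0 < ν v)
    (hass : ∀ l : L5, Integrable (fun v => ν v * expA m l v) ↔ l.2.2 < 0)
    (ρ : L5) (c : ℝ) :
    IsClosed {l : L5 | l.2.2 < 0 ∧ (∫ v, ν v * expA m l v) - dot5 l ρ ≤ c} := by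
  set S := {l : L5 | l.2.2 < 0 ∧ (∫ v, ν v * expA m l v) - dot5 l ρ ≤ c} with hS
  refine isClosed_of_closure_subset fun l hl => ?_
  obtain ⟨x, hxS, hxlim⟩ := mem_closure_iff_seq_limit.mp hl
  have hcont_dot : ∀ y : L5, Continuous fun z : L5 => dot5 z y := fun y => (dualCLM y).continuous
  have hcd : Filter.Tendsto (fun n => dot5 (x n) ρ) atTop (𝓝 (dot5 l ρ)) :=
    ((hcont_dot ρ).tendsto l).comp hxlim
  have hIn : ∀ n, Integrable (fun v => ν v * expA m (x n) v) :=
    fun n => (hass (x n)).mpr (hxS n).1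
  have hInle : ∀ n, (∫ v, ν v * expA m (x n) v) ≤ c + dot5 (x n) ρ := by
    intro n; have := (hxS n).2; linarith
  -- Fatou
  have hmeasn : ∀ n, Measurable fun v => ENNReal.ofReal (ν v * expA m (x n) v) := fun n =>
    (hν.mul (continuous_expA m (x n)).measurable).ennreal_ofReal
  have hpt : ∀ v, Filter.Tendsto (fun n => ENNReal.ofReal (ν v * expA m (x n) v)) atTop
      (𝓝 (ENNReal.ofReal (ν v * expA m l v))) := by
    intro v
    apply ENNReal.continuous_ofReal.continuousAt.tendsto.comp
    apply (Continuous.tendsto ?_ l).comp hxlim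
    exact continuous_const.mul (Real.continuous_exp.comp (hcont_dot (aVec m v)))
  have key : (∫⁻ v, ENNReal.ofReal (ν v * expA m l v)) ≤ ENNReal.ofReal (c + dot5 l ρ) := by
    calc (∫⁻ v, ENNReal.ofReal (ν v * expA m l v))
        = ∫⁻ v, Filter.liminf (fun n => ENNReal.ofReal (ν v * expA m (x n) v)) atTop :=
          lintegral_congr fun v => ((hpt v).liminf_eq).symm
      _ ≤ Filter.liminf (fun n => ∫⁻ v, ENNReal.ofReal (ν v * expA m (x n) v)) atTop :=
          lintegral_liminf_le hmeasn
      _ ≤ Filter.liminf (fun n => ENNReal.ofReal (c + dot5 (x n) ρ)) atTop := by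
          refine Filter.liminf_le_liminf (Filter.Eventually.of_forall fun n => ?_)
          rw [← ofReal_integral_eq_lintegral_ofReal (hIn n) (Filter.Eventually.of_forall
            fun v => mul_nonneg (hνpos v).le (expA_pos m (x n) v).le)]
          exact ENNReal.ofReal_le_ofReal (hInle n)
      _ = ENNReal.ofReal (c + dot5 l ρ) := by
          refine Filter.Tendsto.liminf_eq ?_
          exact ENNReal.continuous_ofReal.continuousAt.tendsto.comp (tendsto_const_nhds.add hcd)
  have hfin : (∫⁻ v, ENNReal.ofReal (ν v * expA m l v)) < ⊤ :=
    lt_of_le_of_lt key ENNReal.ofReal_lt_top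
  have hIntl : Integrable (fun v => ν v * expA m l v) := by
    refine ⟨hν.aestronglyMeasurable.mul (continuous_expA m l).aestronglyMeasurable, ?_⟩
    rw [hasFiniteIntegral_iff_ofReal (Filter.Eventually.of_forall
      fun v => mul_nonneg (hνpos v).le (expA_pos m l v).le)]
    exact hfin
  have hlΛ : l.2.2 < 0 := (hass l).mp hIntl
  refine ⟨hlΛ, ?_⟩
  have hpos := integral_expA_pos hνpos hIntl
  have hOR : ENNReal.ofReal (∫ v, ν v * expA m l v) = ∫⁻ v, ENNReal.ofReal (ν v * expA m l v) :=
    ofReal_integral_eq_lintegral_ofReal hIntl (Filter.Eventually.of_forall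
      fun v => mul_nonneg (hνpos v).le (expA_pos m l v).le)
  rcases le_or_gt (c + dot5 l ρ) 0 with hneg | hpos2
  · exfalso
    have h0 : ENNReal.ofReal (∫ v, ν v * expA m l v) = 0 := by
      rw [hOR]
      exact le_antisymm (key.trans (by simp [ENNReal.ofReal_eq_zero.mpr hneg])) zero_le
    rw [ENNReal.ofReal_eq_zero] at h0
    linarith
  · have := (ENNReal.ofReal_le_ofReal_iff hpos2.le).mp (hOR ▸ key)
    linarith

lemma lambda_convex : Convex ℝ {l : L5 | l.2.2 < 0} := by
  intro x hx y hy a b ha hb hab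
  have hx' : x.2.2 < 0 := hx
  have hy' : y.2.2 < 0 := hy
  show (a • x + b • y).2.2 < 0
  have he : (a • x + b • y).2.2 = a * x.2.2 + b * y.2.2 := by
    simp [Prod.smul_snd, Prod.snd_add]
  rw [he]
  rcases ha.eq_or_lt with rfl | hapos
  · simp at hab; rw [hab]; simpa
  · have h1 : a * x.2.2 < 0 := mul_neg_of_pos_of_neg hapos hx'
    have h2 : b * y.2.2 ≤ 0 := mul_nonpos_of_nonneg_of_nonpos hb hy'.le
    linarith

lemma phi_convexOn {m : ℝ} {ν : V3 → ℝ} (hνpos : ∀ v, 0 < ν v)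
    (hass : ∀ l : L5, Integrable (fun v => ν v * expA m l v) ↔ l.2.2 < 0) (ρ : L5) :
    ConvexOn ℝ {l : L5 | l.2.2 < 0}
      (fun l => (∫ v, ν v * expA m l v) - dot5 l ρ) := by
  refine ⟨lambda_convex, ?_⟩
  intro x hx y hy a b ha hb hab
  have hxy : a • x + b • y ∈ {l : L5 | l.2.2 < 0} := lambda_convex hx hy ha hb hab
  have Ix : Integrable (fun v => ν v * expA m x v) := (hass x).mpr hx
  have Iy : Integrable (fun v => ν v * expA m y v) := (hass y).mpr hy
  have Ixy : Integrable (fun v => ν v * expA m (a • x + b • y) v) := (hass _).mpr hxy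
  have hptw : ∀ v, ν v * expA m (a • x + b • y) v
      ≤ a * (ν v * expA m x v) + b * (ν v * expA m y v) := by
    intro v
    have hdot : dot5 (a • x + b • y) (aVec m v)
        = a * dot5 x (aVec m v) + b * dot5 y (aVec m v) := by
      rw [dot5_add_left, dot5_smul_left, dot5_smul_left]
    have hexp : Real.exp (a * dot5 x (aVec m v) + b * dot5 y (aVec m v))
        ≤ a * Real.exp (dot5 x (aVec m v)) + b * Real.exp (dot5 y (aVec m v)) :=
      convexOn_exp.2 (Set.mem_univ _) (Set.mem_univ _) ha hb hab
    have : expA m (a • x + b • y) v ≤ a * expA m x v + b * expA m y v := by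
      show Real.exp (dot5 (a • x + b • y) (aVec m v)) ≤ _
      rw [hdot]; exact hexp
    calc ν v * expA m (a • x + b • y) v ≤ ν v * (a * expA m x v + b * expA m y v) :=
          mul_le_mul_of_nonneg_left this (hνpos v).le
      _ = a * (ν v * expA m x v) + b * (ν v * expA m y v) := by ring
  have hint : (∫ v, ν v * expA m (a • x + b • y) v)
      ≤ ∫ v, (a * (ν v * expA m x v) + b * (ν v * expA m y v)) := by
    refine integral_mono Ixy ((Ix.const_mul a).add (Iy.const_mul b)) hptw
  rw [integral_add (Ix.const_mul a) (Iy.const_mul b), integral_const_mul, integral_const_mul]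
    at hint
  have hdotc : dot5 (a • x + b • y) ρ = a * dot5 x ρ + b * dot5 y ρ := by
    rw [dot5_add_left, dot5_smul_left, dot5_smul_left]
  simp only [smul_eq_mul]
  rw [hdotc]
  linarith

end BGK

namespace BGK

lemma pick_quad (a A B c : ℝ) (ha : 0 < a) : ∃ t, 1 ≤ t ∧ c < a * t ^ 2 - A - t * B := by
  refine ⟨(|A| + |B| + |c| + 1) / a + 1, ?_, ?_⟩
  · have : 0 ≤ (|A| + |B| + |c| + 1) / a := by positivity
    linarith
  · have ht1 : (1:ℝ) ≤ (|A| + |B| + |c| + 1) / a + 1 := by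
      have : 0 ≤ (|A| + |B| + |c| + 1) / a := by positivity
      linarith
    have ht0 : (0:ℝ) ≤ (|A| + |B| + |c| + 1) / a + 1 := by linarith
    have hat2 : a * ((|A| + |B| + |c| + 1) / a + 1) = |A| + |B| + |c| + 1 + a := by
      field_simp
    have hF3 : ((|A| + |B| + |c| + 1) / a + 1) * B ≤ ((|A| + |B| + |c| + 1) / a + 1) * |B| :=
      mul_le_mul_of_nonneg_left (le_abs_self B) ht0
    nlinarith [hat2, hF3, le_abs_self A, le_abs_self c,
      mul_nonneg (sub_nonneg.mpr ht1) (abs_nonneg A),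
      mul_nonneg (sub_nonneg.mpr ht1) (abs_nonneg c),
      mul_nonneg ht0 ha.le, mul_le_mul_of_nonneg_right hat2.le ht0]

lemma pick_tA (β ε' A B c : ℝ) (hβ : 0 < β) (hε' : 0 < ε') :
    ∃ t : ℝ, 0 ≤ t ∧ c < Real.exp (t * ε') * β - A - t * B := by
  obtain ⟨t, ht1, hq⟩ := pick_quad (β * ε' ^ 2 / 4) A B c (by positivity)
  have ht0 : (0:ℝ) ≤ t := by linarith
  refine ⟨t, ht0, ?_⟩
  have hexpquad : β * ε' ^ 2 / 4 * t ^ 2 ≤ Real.exp (t * ε') * β := by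
    have h1 : (t * ε') / 2 + 1 ≤ Real.exp ((t * ε') / 2) := Real.add_one_le_exp _
    have h2 : Real.exp ((t * ε') / 2) * Real.exp ((t * ε') / 2) = Real.exp (t * ε') := by
      rw [← Real.exp_add]; ring_nf
    have h3 : 0 ≤ (t * ε') / 2 := by positivity
    have h4 : ((t * ε') / 2 + 1) * ((t * ε') / 2 + 1)
        ≤ Real.exp ((t * ε') / 2) * Real.exp ((t * ε') / 2) :=
      mul_le_mul h1 h1 (by positivity) (Real.exp_pos _).le
    have h5 : t ^ 2 * ε' ^ 2 / 4 ≤ Real.exp (t * ε') := by nlinarith [h4, h2, h3]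
    nlinarith [mul_le_mul_of_nonneg_right h5 hβ.le]
  linarith

lemma pick_tB (A B c : ℝ) (hB : B < 0) : ∃ t : ℝ, 0 ≤ t ∧ c < 0 - A - t * B := by
  have hBpos : 0 < -B := by linarith
  refine ⟨(|c| + |A| + 1) / (-B), div_nonneg (by positivity) hBpos.le, ?_⟩
  have hx : (|c| + |A| + 1) / (-B) * B = -(|c| + |A| + 1) := by
    rw [div_mul_eq_mul_div, div_eq_iff hBpos.ne']
    ring
  rw [hx]
  have := le_abs_self c
  have := le_abs_self A
  linarith

lemma exists_match {m : ℝ} (hm : 0 < m) {ν : V3 → ℝ} (hν : Measurable ν) (hνpos : ∀ v, 0 < ν v)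
    (hass : ∀ l : L5, Integrable (fun v => ν v * expA m l v) ↔ l.2.2 < 0)
    (hass2 : ∀ l : L5, l.2.2 < 0 → Integrable (fun v => ν v * (1 + nsq v) * expA m l v))
    {f : V3 → ℝ} (hfmeas : Measurable f) (hf0 : ∀ v, 0 ≤ f v)
    (hfne : ¬ f =ᵐ[volume] (fun _ => (0 : ℝ)))
    (hfint : Integrable (fun v => ν v * (1 + nsq v) * f v)) :
    ∃ l : L5, l.2.2 < 0 ∧ momentMatch m ν f l := by
  have hν0 : ∀ v, 0 ≤ ν v := fun v => (hνpos v).le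
  set ρ : L5 := momVec m ν f with hρ
  have hdotρ : ∀ δ : L5, dot5 δ ρ = ∫ v, ν v * (dot5 δ (aVec m v) * f v) :=
    fun δ => dot5_momVec hm hν hν0 hfmeas.aestronglyMeasurable hf0 hfint δ
  set l₀ : L5 := ((0:ℝ), (0:V3), (-1:ℝ)) with hl₀def
  have hl₀ : l₀.2.2 < 0 := by norm_num [hl₀def]
  set c : ℝ := (∫ v, ν v * expA m l₀ v) - dot5 l₀ ρ with hc
  set S : Set L5 := {l : L5 | l.2.2 < 0 ∧ (∫ v, ν v * expA m l v) - dot5 l ρ ≤ c} with hS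
  have hSclosed : IsClosed S := sublevel_closed hν hνpos hass ρ c
  have hφconv := phi_convexOn hνpos hass ρ
  have hSconv : Convex ℝ S := hφconv.convex_le c
  have hl₀S : l₀ ∈ S := ⟨hl₀, le_refl c⟩
  -- Step: boundedness of S
  have hbounded : Bornology.IsBounded S := by
    by_contra hnb
    have hfar : ∀ n : ℕ, ∃ x, x ∈ S ∧ (n:ℝ) + 1 ≤ ‖x - l₀‖ := by
      intro n
      by_contra hno
      push_neg at hno
      refine hnb ((Metric.isBounded_closedBall (x := l₀) (r := (n:ℝ)+1)).subset fun y hy => ?_)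
      rw [Metric.mem_closedBall, dist_eq_norm]
      exact (hno y hy).le
    choose x hxS hxfar using hfar
    have hTpos : ∀ n, 0 < ‖x n - l₀‖ := fun n =>
      lt_of_lt_of_le (by positivity) (hxfar n)
    set δs : ℕ → L5 := fun n => ‖x n - l₀‖⁻¹ • (x n - l₀) with hδs
    have hδmem : ∀ n, δs n ∈ Metric.sphere (0:L5) 1 := by
      intro n
      rw [mem_sphere_zero_iff_norm, hδs]
      simp only []
      rw [norm_smul, norm_inv, norm_norm]
      field_simp
      exact div_self (hTpos n).ne'
    obtain ⟨δ, hδsph, ψ, hψmono, hψtend⟩ := (isCompact_sphere (0:L5) 1).tendsto_subseq hδmem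
    have hδnorm : ‖δ‖ = 1 := mem_sphere_zero_iff_norm.mp hδsph
    have hδne : δ ≠ 0 := by
      intro h; rw [h, norm_zero] at hδnorm; norm_num at hδnorm
    have hray : ∀ t : ℝ, 0 ≤ t → l₀ + t • δ ∈ S := by
      intro t ht
      have hmem : ∀ k : ℕ, t ≤ ‖x (ψ k) - l₀‖ → l₀ + t • δs (ψ k) ∈ S := by
        intro k hk
        have hT := hTpos (ψ k)
        have h01a : 0 ≤ t / ‖x (ψ k) - l₀‖ := div_nonneg ht hT.le
        have h01b : t / ‖x (ψ k) - l₀‖ ≤ 1 := (div_le_one hT).mpr hk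
        have hcomb := hSconv (hxS (ψ k)) hl₀S h01a (by linarith)
          (by ring : t / ‖x (ψ k) - l₀‖ + (1 - t / ‖x (ψ k) - l₀‖) = 1)
        have heq : (t / ‖x (ψ k) - l₀‖) • (x (ψ k)) + (1 - t / ‖x (ψ k) - l₀‖) • l₀
            = l₀ + t • δs (ψ k) := by
          rw [hδs]
          simp only []
          rw [smul_smul, ← div_eq_mul_inv]
          module
        rw [heq] at hcomb
        exact hcomb
      have htendk : Filter.Tendsto (fun k => l₀ + t • δs (ψ k)) atTop (𝓝 (l₀ + t • δ)) :=
        tendsto_const_nhds.add (hψtend.const_smul t)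
      refine hSclosed.mem_of_tendsto htendk (Filter.eventually_atTop.mpr ⟨⌈t⌉₊, fun k hk => hmem k ?_⟩)
      have h1 : (k:ℝ) ≤ (ψ k : ℝ) := by exact_mod_cast hψmono.le_apply
      have h2 := hxfar (ψ k)
      calc t ≤ (⌈t⌉₊ : ℝ) := Nat.le_ceil t
        _ ≤ (k:ℝ) := by exact_mod_cast hk
        _ ≤ (ψ k : ℝ) := h1
        _ ≤ (ψ k : ℝ) + 1 := by linarith
        _ ≤ ‖x (ψ k) - l₀‖ := h2
    by_cases hcase : ∃ v, 0 < dot5 δ (aVec m v)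
    · -- Case A : exponential blowup along the ray
      obtain ⟨v₀, hv₀⟩ := hcase
      set ε' : ℝ := dot5 δ (aVec m v₀) / 2 with hε'
      have hε'pos : 0 < ε' := by rw [hε']; linarith
      set U : Set V3 := {v : V3 | ε' < dot5 δ (aVec m v)} ∩ Metric.ball v₀ 1 with hU
      have hUopen : IsOpen U :=
        (isOpen_lt continuous_const (continuous_dot5_aVec m δ)).inter Metric.isOpen_ball
      have hv₀U : v₀ ∈ U := by
        constructor
        · show ε' < dot5 δ (aVec m v₀); rw [hε']; linarith
        · exact Metric.mem_ball_self one_pos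
      have hUmeas : MeasurableSet U := hUopen.measurableSet
      have hI₀ : Integrable (fun v => ν v * expA m l₀ v) := (hass l₀).mpr hl₀
      set β : ℝ := ∫ v in U, ν v * expA m l₀ v with hβ
      have hβpos : 0 < β := by
        rw [hβ]
        rw [setIntegral_pos_iff_support_of_nonneg_ae
          (Filter.Eventually.of_forall fun v => mul_nonneg (hν0 v) (expA_pos m l₀ v).le)
          hI₀.integrableOn]
        have hsupp : Function.support (fun v => ν v * expA m l₀ v) ∩ U = U := by
          refine Set.inter_eq_right.mpr fun v _ => ?_
          exact (mul_pos (hνpos v) (expA_pos m l₀ v)).ne'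
        rw [hsupp]
        exact hUopen.measure_pos volume ⟨v₀, hv₀U⟩
      have hφlb : ∀ t : ℝ, 0 ≤ t →
          Real.exp (t * ε') * β - dot5 l₀ ρ - t * dot5 δ ρ
            ≤ (∫ v, ν v * expA m (l₀ + t • δ) v) - dot5 (l₀ + t • δ) ρ := by
        intro t ht
        have hlt := hray t ht
        have hIt : Integrable (fun v => ν v * expA m (l₀ + t • δ) v) := (hass _).mpr hlt.1
        have hstep1 : (∫ v in U, ν v * expA m (l₀ + t • δ) v)
            ≤ ∫ v, ν v * expA m (l₀ + t • δ) v :=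
          setIntegral_le_integral hIt (Filter.Eventually.of_forall fun v =>
            mul_nonneg (hν0 v) (expA_pos _ _ v).le)
        have hstep2 : (∫ v in U, Real.exp (t * ε') * (ν v * expA m l₀ v))
            ≤ ∫ v in U, ν v * expA m (l₀ + t • δ) v := by
          refine setIntegral_mono_on ((hI₀.integrableOn).const_mul _) hIt.integrableOn
            hUmeas fun v hv => ?_
          have hv1 : ε' < dot5 δ (aVec m v) := hv.1
          have hsplit : expA m (l₀ + t • δ) v
              = expA m l₀ v * Real.exp (t * dot5 δ (aVec m v)) := by
            show Real.exp _ = _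
            rw [dot5_add_left, dot5_smul_left, Real.exp_add]
            rfl
          rw [hsplit]
          have hex : Real.exp (t * ε') ≤ Real.exp (t * dot5 δ (aVec m v)) :=
            Real.exp_le_exp.mpr (mul_le_mul_of_nonneg_left hv1.le ht)
          calc Real.exp (t * ε') * (ν v * expA m l₀ v)
              = (ν v * expA m l₀ v) * Real.exp (t * ε') := by ring
            _ ≤ (ν v * expA m l₀ v) * Real.exp (t * dot5 δ (aVec m v)) :=
                mul_le_mul_of_nonneg_left hex (mul_nonneg (hν0 v) (expA_pos m l₀ v).le)
            _ = ν v * (expA m l₀ v * Real.exp (t * dot5 δ (aVec m v))) := by ring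
        have hstep3 : (∫ v in U, Real.exp (t * ε') * (ν v * expA m l₀ v))
            = Real.exp (t * ε') * β := by
          rw [hβ, integral_const_mul]
        have hdott : dot5 (l₀ + t • δ) ρ = dot5 l₀ ρ + t * dot5 δ ρ := by
          rw [dot5_add_left, dot5_smul_left]
        rw [hdott]
        linarith
      obtain ⟨t₀, ht₀pos, hgt⟩ := pick_tA β ε' (dot5 l₀ ρ) (dot5 δ ρ) c hβpos hε'pos
      have hlb := hφlb t₀ ht₀pos
      have hc2 := (hray t₀ ht₀pos).2
      linarith
    · -- Case B : linear decrease of the dual along the ray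
      push_neg at hcase
      have hBint : Integrable (fun v => ν v * (dot5 δ (aVec m v) * f v)) := by
        have h := integrable_weight hν hν0 hfmeas.aestronglyMeasurable hf0 hfint
          (continuous_dot5_aVec m δ).aestronglyMeasurable
          (C := m * (|δ.1| + (∑ i, |δ.2.1 i|) + |δ.2.2|)) (abs_dot5_aVec_le m hm.le δ)
        simpa [mul_assoc] using h
      have hBval := hdotρ δ
      have hptw : ∀ v, ν v * (dot5 δ (aVec m v) * f v) ≤ 0 := fun v =>
        mul_nonpos_of_nonneg_of_nonpos (hν0 v)
          (mul_nonpos_of_nonpos_of_nonneg (hcase v) (hf0 v))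
      have hB0 : dot5 δ ρ ≤ 0 := by
        rw [hBval]; exact integral_nonpos hptw
      have hBne : dot5 δ ρ ≠ 0 := by
        intro h0
        have hz : ∀ᵐ v, -(ν v * (dot5 δ (aVec m v) * f v)) = 0 := by
          have hnn : (0 : V3 → ℝ) ≤ fun v => -(ν v * (dot5 δ (aVec m v) * f v)) :=
            fun v => neg_nonneg.mpr (hptw v)
          have hintneg : Integrable (fun v => -(ν v * (dot5 δ (aVec m v) * f v))) := hBint.neg
          have hires : (∫ v, -(ν v * (dot5 δ (aVec m v) * f v))) = 0 := by
            rw [integral_neg]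
            rw [hBval] at h0
            rw [h0]; ring
          have := (integral_eq_zero_iff_of_nonneg hnn hintneg).mp hires
          filter_upwards [this] with v hv using hv
        have hnull := null_zero_set δ hδne
        have hae : ∀ᵐ v, ¬ (δ.1 + dot3 δ.2.1 v + δ.2.2 * nsq v = 0) := by
          rw [ae_iff]
          simpa using hnull
        apply hfne
        filter_upwards [hz, hae] with v h1 h2
        have hP : dot5 δ (aVec m v) ≠ 0 := by
          rw [dot5_aVec]
          exact mul_ne_zero hm.ne' h2
        have h3 : ν v * (dot5 δ (aVec m v) * f v) = 0 := by linarith [neg_eq_zero.mp h1]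
        have h4 : dot5 δ (aVec m v) * f v = 0 := by
          rcases mul_eq_zero.mp h3 with h' | h'
          · exact absurd h' (hνpos v).ne'
          · exact h'
        rcases mul_eq_zero.mp h4 with h' | h'
        · exact absurd h' hP
        · exact h'
      have hBneg : dot5 δ ρ < 0 := lt_of_le_of_ne hB0 hBne
      obtain ⟨t₁, ht₁pos, hgt⟩ := pick_tB (dot5 l₀ ρ) (dot5 δ ρ) c hBneg
      have hlt := hray t₁ ht₁pos
      have hφge : 0 - dot5 l₀ ρ - t₁ * dot5 δ ρ
          ≤ (∫ v, ν v * expA m (l₀ + t₁ • δ) v) - dot5 (l₀ + t₁ • δ) ρ := by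
        have hnn : 0 ≤ ∫ v, ν v * expA m (l₀ + t₁ • δ) v :=
          integral_nonneg fun v => mul_nonneg (hν0 v) (expA_pos _ _ v).le
        have hdott : dot5 (l₀ + t₁ • δ) ρ = dot5 l₀ ρ + t₁ * dot5 δ ρ := by
          rw [dot5_add_left, dot5_smul_left]
        rw [hdott]; linarith
      have hc2 := hlt.2
      linarith
  -- Step: compactness, minimizer, first-order condition
  have hScompact : IsCompact S := Metric.isCompact_of_isClosed_isBounded hSclosed hbounded
  have hContOn : ContinuousOn (fun l : L5 => (∫ v, ν v * expA m l v) - dot5 l ρ) S := by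
    intro l hl
    have hd := hasFDerivAt_int_exp hm hν hνpos hass2 l hl.1 ((hass l).mpr hl.1)
    have hc1 : ContinuousAt (fun l' : L5 => ∫ v, ν v * expA m l' v) l := hd.2.continuousAt
    have hc2 : ContinuousAt (fun l' : L5 => dot5 l' ρ) l := (dualCLM ρ).continuous.continuousAt
    exact (hc1.sub hc2).continuousWithinAt
  obtain ⟨lm, hlmS, hlmmin⟩ := hScompact.exists_isMinOn ⟨l₀, hl₀S⟩ hContOn
  have hmin' := isMinOn_iff.mp hlmmin
  have hlmΛ : lm.2.2 < 0 := hlmS.1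
  have hopenΛ : IsOpen {l : L5 | l.2.2 < 0} := by
    have hcontp : Continuous fun l : L5 => l.2.2 := (continuous_snd.comp continuous_snd)
    exact isOpen_Iio.preimage hcontp
  have hlocal : IsLocalMin (fun l : L5 => (∫ v, ν v * expA m l v) - dot5 l ρ) lm := by
    filter_upwards [hopenΛ.mem_nhds hlmΛ] with l hlΛ'
    by_cases hlS : l ∈ S
    · exact hmin' l hlS
    · have h1 : ¬ ((∫ v, ν v * expA m l v) - dot5 l ρ ≤ c) := fun hcc => hlS ⟨hlΛ', hcc⟩
      have h2 := hmin' l₀ hl₀S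
      have h3 : c < (∫ v, ν v * expA m l v) - dot5 l ρ := lt_of_not_ge h1
      linarith
  have hd := hasFDerivAt_int_exp hm hν hνpos hass2 lm hlmΛ ((hass lm).mpr hlmΛ)
  have hφd : HasFDerivAt (fun l : L5 => (∫ v, ν v * expA m l v) - dot5 l ρ)
      ((∫ v, (ν v * expA m lm v) • dualCLM (aVec m v)) - dualCLM ρ) lm :=
    hd.2.sub (dualCLM ρ).hasFDerivAt
  have hzero := hlocal.hasFDerivAt_eq_zero hφd
  refine ⟨lm, hlmΛ, momentMatch_of_forall fun δ' => ?_⟩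
  have h1 : ((∫ v, (ν v * expA m lm v) • dualCLM (aVec m v)) - dualCLM ρ) δ' = 0 := by
    rw [hzero]; rfl
  rw [ContinuousLinearMap.sub_apply] at h1
  have h2 : (∫ v, (ν v * expA m lm v) • dualCLM (aVec m v)) δ' = dot5 δ' ρ := by
    have : dualCLM ρ δ' = dot5 δ' ρ := rfl
    linarith [h1, this.symm.le]
  rw [ContinuousLinearMap.integral_apply hd.1 δ'] at h2
  have h3 : (∫ v, ((ν v * expA m lm v) • dualCLM (aVec m v)) δ')
      = ∫ v, ν v * (dot5 δ' (aVec m v) * expA m lm v) := by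
    congr 1; funext v
    rw [ContinuousLinearMap.smul_apply, dualCLM_apply, smul_eq_mul]
    ring
  rw [h3] at h2
  rw [h2, hdotρ δ']
end BGK

namespace BGK

lemma expA_weighted_facts {m : ℝ} {ν : V3 → ℝ} (hν : Measurable ν) (hν0 : ∀ v, 0 ≤ ν v)
    {l : L5}
    (hw : Integrable (fun v => ν v * (1 + nsq v) * expA m l v))
    {G : V3 → ℝ} (hG : AEStronglyMeasurable G volume) {C : ℝ}
    (hGb : ∀ v, |G v| ≤ C * (1 + nsq v)) :
    Integrable (fun v => ν v * G v * expA m l v) :=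
  integrable_weight hν hν0 (continuous_expA m l).aestronglyMeasurable
    (fun v => (expA_pos m l v).le) hw hG hGb

lemma ae_dot5_zero_imp_eq {m : ℝ} (hm : 0 < m) {δ : L5}
    (hae : ∀ᵐ v, dot5 δ (aVec m v) = 0) : δ = 0 := by
  by_contra hne
  have hnull := null_zero_set δ hne
  have h1 : volume {v : V3 | ¬ (dot5 δ (aVec m v) = 0)} = 0 := by
    rw [← ae_iff]; exact hae
  have h2 : {v : V3 | dot5 δ (aVec m v) = 0}
      ⊆ {v : V3 | δ.1 + dot3 δ.2.1 v + δ.2.2 * nsq v = 0} := by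
    intro v hv
    have := hv
    rw [Set.mem_setOf_eq, dot5_aVec] at this
    rcases mul_eq_zero.mp this with h' | h'
    · exact absurd h' hm.ne'
    · exact h'
  have h3 : volume {v : V3 | dot5 δ (aVec m v) = 0} = 0 :=
    measure_mono_null h2 hnull
  have h4 : (volume : Measure V3) Set.univ
      ≤ volume {v : V3 | dot5 δ (aVec m v) = 0}
        + volume {v : V3 | ¬ (dot5 δ (aVec m v) = 0)} := by
    rw [show (Set.univ : Set V3) = {v : V3 | dot5 δ (aVec m v) = 0}
      ∪ {v : V3 | ¬ (dot5 δ (aVec m v) = 0)} by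
        ext v; simp [Set.mem_union, em]]
    exact measure_union_le _ _
  rw [h1, h3] at h4
  simp only [add_zero, le_zero_iff] at h4
  exact (NeZero.ne (volume : Measure V3)) (Measure.measure_univ_eq_zero.mp h4)

lemma match_unique {m : ℝ} (hm : 0 < m) {ν : V3 → ℝ} (hν : Measurable ν)
    (hνpos : ∀ v, 0 < ν v)
    (hass2 : ∀ l : L5, l.2.2 < 0 → Integrable (fun v => ν v * (1 + nsq v) * expA m l v))
    {f : V3 → ℝ}
    (l l' : L5) (hl : l.2.2 < 0) (hl' : l'.2.2 < 0)
    (h : momentMatch m ν f l) (h' : momentMatch m ν f l') : l = l' := by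
  have hν0 : ∀ v, 0 ≤ ν v := fun v => (hνpos v).le
  set δ : L5 := l - l' with hδ
  have hmom : momVec m ν (expA m l) = momVec m ν (expA m l') := by
    rw [momVec_eq_of_match h, momVec_eq_of_match h']
  have hfacts : ∀ (l₁ : L5), l₁.2.2 < 0 →
      dot5 δ (momVec m ν (expA m l₁)) = ∫ v, ν v * (dot5 δ (aVec m v) * expA m l₁ v) := by
    intro l₁ hl₁
    exact dot5_momVec hm hν hν0 (continuous_expA m l₁).aestronglyMeasurable
      (fun v => (expA_pos m l₁ v).le) (hass2 l₁ hl₁) δ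
  have hEq : (∫ v, ν v * (dot5 δ (aVec m v) * expA m l v))
      = ∫ v, ν v * (dot5 δ (aVec m v) * expA m l' v) := by
    rw [← hfacts l hl, ← hfacts l' hl', hmom]
  have hGaesm : AEStronglyMeasurable (fun v => dot5 δ (aVec m v)) volume :=
    (continuous_dot5_aVec m δ).aestronglyMeasurable
  have hI1 : Integrable (fun v => ν v * dot5 δ (aVec m v) * expA m l v) :=
    expA_weighted_facts hν hν0 (hass2 l hl) hGaesm (abs_dot5_aVec_le m hm.le δ)
  have hI2 : Integrable (fun v => ν v * dot5 δ (aVec m v) * expA m l' v) :=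
    expA_weighted_facts hν hν0 (hass2 l' hl') hGaesm (abs_dot5_aVec_le m hm.le δ)
  set D : V3 → ℝ := fun v => ν v * dot5 δ (aVec m v) * expA m l v
    - ν v * dot5 δ (aVec m v) * expA m l' v with hD
  have hDint : Integrable D := hI1.sub hI2
  have hDnn : ∀ v, 0 ≤ D v := by
    intro v
    have hkey : dot5 δ (aVec m v) = dot5 l (aVec m v) - dot5 l' (aVec m v) := dot5_sub_left l l' _
    have h0 := exp_mono_mul_nonneg (dot5 l (aVec m v)) (dot5 l' (aVec m v))
    have : D v = ν v * ((dot5 l (aVec m v) - dot5 l' (aVec m v))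
        * (Real.exp (dot5 l (aVec m v)) - Real.exp (dot5 l' (aVec m v)))) := by
      rw [hD]; simp only [hkey]
      show _ = ν v * ((dot5 l (aVec m v) - dot5 l' (aVec m v))
        * (expA m l v - expA m l' v))
      ring
    rw [this]
    exact mul_nonneg (hν0 v) h0
  have hDzero : (∫ v, D v) = 0 := by
    rw [hD]
    rw [integral_sub hI1 hI2]
    have e1 : (∫ v, ν v * dot5 δ (aVec m v) * expA m l v)
        = ∫ v, ν v * (dot5 δ (aVec m v) * expA m l v) := by congr 1; funext v; ring
    have e2 : (∫ v, ν v * dot5 δ (aVec m v) * expA m l' v)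
        = ∫ v, ν v * (dot5 δ (aVec m v) * expA m l' v) := by congr 1; funext v; ring
    rw [e1, e2, hEq]; ring
  have hae := (integral_eq_zero_iff_of_nonneg hDnn hDint).mp hDzero
  have haep : ∀ᵐ v, dot5 δ (aVec m v) = 0 := by
    filter_upwards [hae] with v hv
    have hv' : D v = 0 := hv
    rw [hD] at hv'
    have h4 : ν v * (dot5 δ (aVec m v) * (expA m l v - expA m l' v)) = 0 := by
      simp only at hv' ⊢; linarith [hv']
    have h5 : dot5 δ (aVec m v) * (expA m l v - expA m l' v) = 0 := by
      rcases mul_eq_zero.mp h4 with h6 | h6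
      · exact absurd h6 (hνpos v).ne'
      · exact h6
    have hkey : dot5 δ (aVec m v) = dot5 l (aVec m v) - dot5 l' (aVec m v) := dot5_sub_left l l' _
    rw [hkey] at h5 ⊢
    have := eq_of_exp_mono_mul_eq_zero (x := dot5 l (aVec m v)) (y := dot5 l' (aVec m v))
      (by rw [← h5]; show _ = _; rfl)
    rw [this]; ring
  have := ae_dot5_zero_imp_eq hm haep
  rw [hδ, sub_eq_zero] at this
  exact this

end BGK

namespace BGK

lemma momVec_eq_of_chi {m : ℝ} (hm : 0 < m) {ν : V3 → ℝ} (hν : Measurable ν)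
    (hνpos : ∀ v, 0 < ν v)
    {f : V3 → ℝ} (hfmeas : Measurable f) (hf0 : ∀ v, 0 ≤ f v)
    (hfint : Integrable (fun v => ν v * (1 + nsq v) * f v))
    {g : V3 → ℝ} (hchi : memChi m ν f g) :
    momVec m ν g = momVec m ν f := by
  have hν0 : ∀ v, 0 ≤ ν v := fun v => (hνpos v).le
  obtain ⟨hg0, hgw, hgc0, hgci, hgcq⟩ := hchi
  have hgaesm : AEStronglyMeasurable g volume := aesm_of_weighted hν hνpos hgw
  have hmb : ∀ v, |(m : ℝ)| ≤ m * (1 + nsq v) := fun v => by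
    rw [abs_of_nonneg hm.le]; nlinarith [nsq_nonneg v]
  have hIc : ∀ (h : V3 → ℝ), AEStronglyMeasurable h volume → (∀ v, 0 ≤ h v) →
      Integrable (fun v => ν v * (1 + nsq v) * h v) →
      (Integrable (fun v => ν v * (m * h v))
        ∧ (∀ i : Fin 3, Integrable (fun v => ν v * (m * v i) * h v))
        ∧ Integrable (fun v => ν v * (m * nsq v) * h v)) := by
    intro h haesm h0 hw
    refine ⟨?_, ?_, ?_⟩
    · have := integrable_weight hν hν0 haesm h0 hw aestronglyMeasurable_const hmb
      simpa [mul_assoc] using this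
    · intro i
      refine integrable_weight hν hν0 haesm h0 hw
        ((continuous_const.mul (continuous_apply i)).aestronglyMeasurable) (C := m) fun v => ?_
      rw [abs_mul, abs_of_nonneg hm.le]
      exact mul_le_mul_of_nonneg_left (abs_apply_le v i) hm.le
    · refine integrable_weight hν hν0 haesm h0 hw
        ((continuous_const.mul continuous_nsq).aestronglyMeasurable) (C := m) fun v => ?_
      rw [abs_mul, abs_of_nonneg hm.le, abs_of_nonneg (nsq_nonneg v)]
      nlinarith [nsq_nonneg v]
  obtain ⟨hg1, hg2, hg3⟩ := hIc g hgaesm hg0 hgw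
  obtain ⟨hf1, hf2, hf3⟩ := hIc f hfmeas.aestronglyMeasurable hf0 hfint
  unfold momVec
  refine Prod.ext ?_ (Prod.ext ?_ ?_)
  · show (∫ v, ν v * (m * g v)) = ∫ v, ν v * (m * f v)
    refine integral_eq_of_sub_zero hg1 hf1 ?_
    rw [← hgc0]; congr 1; funext v; ring
  · funext i
    show (∫ v, ν v * (m * v i) * g v) = ∫ v, ν v * (m * v i) * f v
    refine integral_eq_of_sub_zero (hg2 i) (hf2 i) ?_
    rw [← hgci i]; congr 1; funext v; ring
  · show (∫ v, ν v * (m * nsq v) * g v) = ∫ v, ν v * (m * nsq v) * f v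
    refine integral_eq_of_sub_zero hg3 hf3 ?_
    rw [← hgcq]; congr 1; funext v; ring

lemma min_part {m : ℝ} (hm : 0 < m) {ν : V3 → ℝ} (hν : Measurable ν)
    (hνpos : ∀ v, 0 < ν v)
    (hass2 : ∀ l : L5, l.2.2 < 0 → Integrable (fun v => ν v * (1 + nsq v) * expA m l v))
    {f : V3 → ℝ} (hfmeas : Measurable f) (hf0 : ∀ v, 0 ≤ f v)
    (hfint : Integrable (fun v => ν v * (1 + nsq v) * f v))
    {l : L5} (hl : l.2.2 < 0) (hmatch : momentMatch m ν f l)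
    {g : V3 → ℝ} (hchi : memChi m ν f g)
    (hgint : Integrable (fun v => ν v * entH (g v))) :
    (∫ v, ν v * entH (expA m l v)) ≤ (∫ v, ν v * entH (g v)) ∧
    ((∫ v, ν v * entH (g v)) = (∫ v, ν v * entH (expA m l v)) → g =ᵐ[volume] expA m l) := by
  have hν0 : ∀ v, 0 ≤ ν v := fun v => (hνpos v).le
  obtain ⟨hg0, hgw, hgc0, hgci, hgcq⟩ := hchi
  have hgaesm : AEStronglyMeasurable g volume := aesm_of_weighted hν hνpos hgw
  have hGaesm : AEStronglyMeasurable (fun v => dot5 l (aVec m v)) volume :=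
    (continuous_dot5_aVec m l).aestronglyMeasurable
  have hGb := abs_dot5_aVec_le m hm.le l
  set C : ℝ := m * (|l.1| + (∑ i, |l.2.1 i|) + |l.2.2|) with hC
  -- integrability of ν · entH(M)
  have hent_eq : (fun v => ν v * entH (expA m l v))
      = fun v => ν v * (dot5 l (aVec m v) - 1) * expA m l v := by
    funext v
    simp only [entH, expA]
    rw [Real.log_exp]
    ring
  have hMentint : Integrable (fun v => ν v * entH (expA m l v)) := by
    rw [hent_eq]
    refine expA_weighted_facts hν hν0 (hass2 l hl)
      (hGaesm.sub aestronglyMeasurable_const) (C := C + 1) fun v => ?_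
    have h1 := hGb v
    have h2 : |dot5 l (aVec m v) - 1| ≤ |dot5 l (aVec m v)| + 1 := by
      calc |dot5 l (aVec m v) - 1| ≤ |dot5 l (aVec m v)| + |(1:ℝ)| := abs_sub _ _
        _ = |dot5 l (aVec m v)| + 1 := by norm_num
    nlinarith [nsq_nonneg v]
  -- integrability of ν·p·g and ν·p·M
  have hpg : Integrable (fun v => ν v * dot5 l (aVec m v) * g v) :=
    integrable_weight hν hν0 hgaesm hg0 hgw hGaesm hGb
  have hpM : Integrable (fun v => ν v * dot5 l (aVec m v) * expA m l v) :=
    expA_weighted_facts hν hν0 (hass2 l hl) hGaesm hGb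
  -- the linear term has zero integral
  have hmomg : momVec m ν g = momVec m ν f :=
    momVec_eq_of_chi hm hν hνpos hfmeas hf0 hfint ⟨hg0, hgw, hgc0, hgci, hgcq⟩
  have hmomM : momVec m ν (expA m l) = momVec m ν f := momVec_eq_of_match hmatch
  have hdotg : dot5 l (momVec m ν g) = ∫ v, ν v * (dot5 l (aVec m v) * g v) :=
    dot5_momVec hm hν hν0 hgaesm hg0 hgw l
  have hdotM : dot5 l (momVec m ν (expA m l)) = ∫ v, ν v * (dot5 l (aVec m v) * expA m l v) :=
    dot5_momVec hm hν hν0 (continuous_expA m l).aestronglyMeasurable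
      (fun v => (expA_pos m l v).le) (hass2 l hl) l
  have hlin : (∫ v, ν v * dot5 l (aVec m v) * g v)
      = ∫ v, ν v * dot5 l (aVec m v) * expA m l v := by
    have e1 : (∫ v, ν v * dot5 l (aVec m v) * g v)
        = ∫ v, ν v * (dot5 l (aVec m v) * g v) := by congr 1; funext v; ring
    have e2 : (∫ v, ν v * dot5 l (aVec m v) * expA m l v)
        = ∫ v, ν v * (dot5 l (aVec m v) * expA m l v) := by congr 1; funext v; ring
    rw [e1, e2, ← hdotg, ← hdotM, hmomg, hmomM]
  -- the defect function
  set D : V3 → ℝ := fun v => ν v * entH (g v) - ν v * entH (expA m l v)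
    - (ν v * dot5 l (aVec m v) * g v - ν v * dot5 l (aVec m v) * expA m l v) with hD
  have hI12 : Integrable (fun v => ν v * entH (g v) - ν v * entH (expA m l v)) :=
    hgint.sub hMentint
  have hI34 : Integrable (fun v => ν v * dot5 l (aVec m v) * g v
      - ν v * dot5 l (aVec m v) * expA m l v) := hpg.sub hpM
  have hDint : Integrable D := hI12.sub hI34
  have hDnn : ∀ v, 0 ≤ D v := by
    intro v
    have hMpos := expA_pos m l v
    have hlog : Real.log (expA m l v) = dot5 l (aVec m v) := Real.log_exp _
    have hge := entH_ge (w := expA m l v) (z := g v) hMpos (hg0 v)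
    rw [hlog] at hge
    have hfact : D v = ν v * (entH (g v) - entH (expA m l v)
        - dot5 l (aVec m v) * (g v - expA m l v)) := by
      rw [hD]; ring
    rw [hfact]
    apply mul_nonneg (hν0 v)
    nlinarith [hge]
  have hDval : (∫ v, D v) = (∫ v, ν v * entH (g v)) - ∫ v, ν v * entH (expA m l v) := by
    rw [hD, integral_sub hI12 hI34,
      integral_sub hgint hMentint, integral_sub hpg hpM]
    rw [hlin]
    ring
  have hDpos : 0 ≤ ∫ v, D v := integral_nonneg hDnn
  constructor
  · linarith [hDval ▸ hDpos]
  · intro heq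
    have hDzero : (∫ v, D v) = 0 := by rw [hDval, heq]; ring
    have hae := (integral_eq_zero_iff_of_nonneg hDnn hDint).mp hDzero
    filter_upwards [hae] with v hv
    have hv' : D v = 0 := hv
    have hMpos := expA_pos m l v
    have hlog : Real.log (expA m l v) = dot5 l (aVec m v) := Real.log_exp _
    have hfact : D v = ν v * (entH (g v) - entH (expA m l v)
        - dot5 l (aVec m v) * (g v - expA m l v)) := by
      rw [hD]; ring
    rw [hfact] at hv'
    have h5 : entH (g v) - entH (expA m l v)
        - dot5 l (aVec m v) * (g v - expA m l v) = 0 := by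
      rcases mul_eq_zero.mp hv' with h6 | h6
      · exact absurd h6 (hνpos v).ne'
      · exact h6
    refine entH_eq_iff hMpos (hg0 v) ?_
    rw [hlog]
    linarith
end BGK


/-- for every admissible `f` there exists a unique multiplier
`λ ∈ Λ` such that the Maxwellian `M = exp_λ` matches all ν-weighted moments of
`f`; consequently, this `M` is the unique minimizer of `g ↦ ∫ ν h(g)` over χ. -/
theorem unique_multiplier_and_minimizer
    (m : ℝ) (hm : 0 < m)
    (ν : V3 → ℝ) (hνmeas : Measurable ν) (hνpos : ∀ v, 0 < ν v)
    (hass : ∀ l : L5, Integrable (fun v => ν v * expA m l v) ↔ l.2.2 < 0)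
    (hass2 : ∀ l : L5, l.2.2 < 0 →
      Integrable (fun v => ν v * (1 + nsq v) * expA m l v))
    (f : V3 → ℝ) (hfmeas : Measurable f) (hf0 : ∀ v, 0 ≤ f v)
    (hfne : ¬ f =ᵐ[volume] (fun _ => (0 : ℝ)))
    (hfint : Integrable (fun v => ν v * (1 + nsq v) * f v)) :
    (∃! l : L5, l.2.2 < 0 ∧ momentMatch m ν f l) ∧
    (∀ l : L5, l.2.2 < 0 → momentMatch m ν f l →
      (∀ g : V3 → ℝ, memChi m ν f g → Integrable (fun v => ν v * entH (g v)) →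
        (∫ v, ν v * entH (expA m l v)) ≤ ∫ v, ν v * entH (g v)) ∧
      (∀ g : V3 → ℝ, memChi m ν f g → Integrable (fun v => ν v * entH (g v)) →
        (∫ v, ν v * entH (g v)) = (∫ v, ν v * entH (expA m l v)) →
        g =ᵐ[volume] expA m l)) := by
  obtain ⟨l₁, hl₁, hmatch₁⟩ := BGK.exists_match hm hνmeas hνpos hass hass2 hfmeas hf0 hfne hfint
  constructor
  · refine ⟨l₁, ⟨hl₁, hmatch₁⟩, ?_⟩
    rintro l' ⟨hl', hmatch'⟩
    exact BGK.match_unique hm hνmeas hνpos hass2 l' l₁ hl' hl₁ hmatch' hmatch₁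
  · intro l hl hmatch
    constructor
    · intro g hchi hgint
      exact (BGK.min_part hm hνmeas hνpos hass2 hfmeas hf0 hfint hl hmatch hchi hgint).1
    · intro g hchi hgint heq
      exact (BGK.min_part hm hνmeas hνpos hass2 hfmeas hf0 hfint hl hmatch hchi hgint).2 heq
end
end

section
/- For every fixed λ ∈ Λ̄, every unit vector ξ = (ξ₀¹, ξ₀², ξ₁, ξ₂) ∈ ℝ⁶, and every ρ̄ of the form ρ̄ = μ̄(g₁,g₂) with g₁, g₂ nonnegative, neither almost-everywhere zero, and ν₁₂(1+|v|²)g₁, ν₂₁(1+|v|²)g₂ integrable, the one-dimensional function z̄_ξ(s) = z̄(λ + sξ; ρ̄) attains its minimum at a unique point in the open interval Ī(ξ,λ) = (−s̄_b(−ξ,λ), s̄_b(ξ,λ)), where s̄_b(ξ,λ) = sup{ s : (λ+sξ)¹ ∈ Λ and (λ+sξ)² ∈ Λ } (with value +∞ if the boundary is never met); in particular the minimum is not attained at the endpoints. -/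
open MeasureTheory Real Filter
open scoped Topology

noncomputable section

abbrev L6 : Type := ℝ × ℝ × V3 × ℝ

/-- First-species component `λ¹ = (λ₀¹, λ₁, λ₂)` of `λ = (λ₀¹, λ₀², λ₁, λ₂)`. -/
def comp1 (l : L6) : L5 := (l.1, l.2.2.1, l.2.2.2)

/-- Second-species component `λ² = (λ₀², λ₁, λ₂)`. -/
def comp2 (l : L6) : L5 := (l.2.1, l.2.2.1, l.2.2.2)

def dot6 (a b : L6) : ℝ :=
  a.1 * b.1 + a.2.1 * b.2.1 + dot3 a.2.2.1 b.2.2.1 + a.2.2.2 * b.2.2.2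

/-- The mixture functional `Φ(λ) = ∫ ν₁₂ exp(λ¹·a¹) + ∫ ν₂₁ exp(λ²·a²)`. -/
def PhiMix (m₁ m₂ : ℝ) (ν₁₂ ν₂₁ : V3 → ℝ) (l : L6) : ℝ :=
  (∫ v, ν₁₂ v * expA m₁ (comp1 l) v) + (∫ v, ν₂₁ v * expA m₂ (comp2 l) v)

/-- The mixture moment map `μ̄(g₁,g₂) ∈ ℝ⁶`. -/
def muBar (m₁ m₂ : ℝ) (ν₁₂ ν₂₁ g₁ g₂ : V3 → ℝ) : L6 :=
  (∫ v, m₁ * ν₁₂ v * g₁ v,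
   ∫ v, m₂ * ν₂₁ v * g₂ v,
   fun i => (∫ v, m₁ * ν₁₂ v * v i * g₁ v) + ∫ v, m₂ * ν₂₁ v * v i * g₂ v,
   (∫ v, m₁ * ν₁₂ v * nsq v * g₁ v) + ∫ v, m₂ * ν₂₁ v * nsq v * g₂ v)

/-- The mixture dual function `z̄(λ;ρ̄) = Φ(λ) − λ·ρ̄`. -/
def zbar (m₁ m₂ : ℝ) (ν₁₂ ν₂₁ : V3 → ℝ) (l ρ : L6) : ℝ :=
  PhiMix m₁ m₂ ν₁₂ ν₂₁ l - dot6 l ρ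


-- algebra
lemma dot5_add_left (a b c : L5) : dot5 (a + b) c = dot5 a c + dot5 b c := by
  simp [dot5, dot3, add_mul, Finset.sum_add_distrib]; ring

lemma dot5_smul_left (s : ℝ) (a c : L5) : dot5 (s • a) c = s * dot5 a c := by
  simp [dot5, dot3, Finset.mul_sum, mul_assoc, mul_add]

lemma comp1_add (a b : L6) : comp1 (a + b) = comp1 a + comp1 b := rfl
lemma comp2_add (a b : L6) : comp2 (a + b) = comp2 a + comp2 b := rfl
lemma comp1_smul (s : ℝ) (a : L6) : comp1 (s • a) = s • comp1 a := rfl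
lemma comp2_smul (s : ℝ) (a : L6) : comp2 (s • a) = s • comp2 a := rfl

lemma aVec_continuous (m : ℝ) (c : L5) : Continuous fun v : V3 => dot5 c (aVec m v) := by
  unfold dot5 aVec dot3 nsq
  fun_prop

lemma dot5_aVec_eq (c : L5) (m : ℝ) (v : V3) :
    dot5 c (aVec m v) = m * (c.1 + dot3 c.2.1 v + c.2.2 * nsq v) := by
  simp [dot5, aVec, dot3, Finset.mul_sum, mul_add]
  ring_nf

lemma nsq_sphere_null (R : ℝ) : volume {u : V3 | nsq u = R} = 0 := by
  have hmeas : MeasurableSet {u : V3 | nsq u = R} := by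
    have : Continuous (nsq : V3 → ℝ) := by unfold nsq; fun_prop
    exact this.measurable (measurableSet_singleton R)
  have hmp := EuclideanSpace.volume_preserving_symm_measurableEquiv_toLp (Fin 3)
  rw [← hmp.measure_preimage hmeas.nullMeasurableSet]
  have hpre : (MeasurableEquiv.toLp 2 (Fin 3 → ℝ)).symm ⁻¹' {u : V3 | nsq u = R}
      = {x : EuclideanSpace ℝ (Fin 3) | ‖x‖ ^ 2 = R} := by
    ext x
    simp only [Set.mem_preimage, Set.mem_setOf_eq, EuclideanSpace.norm_eq]
    rw [Real.sq_sqrt (by positivity)]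
    have : nsq ((MeasurableEquiv.toLp 2 (Fin 3 → ℝ)).symm x) = ∑ i, (x i) ^ 2 := by
      rfl
    rw [this]
    simp [sq_abs]
  rw [hpre]
  rcases lt_or_ge R 0 with hR | hR
  · convert measure_empty
    · ext x; simp only [Set.mem_setOf_eq, Set.mem_empty_iff_false, iff_false]
      intro h; nlinarith [sq_nonneg ‖x‖]
    · infer_instance
  · have : {x : EuclideanSpace ℝ (Fin 3) | ‖x‖ ^ 2 = R} = Metric.sphere (0 : EuclideanSpace ℝ (Fin 3)) (Real.sqrt R) := by
      ext x
      simp only [Set.mem_setOf_eq, Metric.mem_sphere, dist_zero_right]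
      constructor
      · intro h; rw [← h, Real.sqrt_sq (norm_nonneg x)]
      · intro h; rw [h, Real.sq_sqrt hR]
    rw [this]
    exact Measure.addHaar_sphere volume 0 _

lemma quadric_null (c : ℝ × V3 × ℝ) (hc : c ≠ 0) :
    volume {v : V3 | c.1 + dot3 c.2.1 v + c.2.2 * nsq v = 0} = 0 := by
  obtain ⟨α, β, γ⟩ := c
  simp only at *
  rcases eq_or_ne γ 0 with rfl | hγ
  · rcases eq_or_ne β 0 with rfl | hβ
    · have hα : α ≠ 0 := by
        intro h; exact hc (by simp [h, Prod.ext_iff])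
      convert measure_empty
      · ext v; simp [dot3, hα]
      · infer_instance
    · -- hyperplane case
      obtain ⟨i, hi⟩ : ∃ i, β i ≠ 0 := by
        by_contra h; push_neg at h; exact hβ (funext h)
      set L : V3 →ₗ[ℝ] ℝ :=
        { toFun := fun v => dot3 β v
          map_add' := by intro a b; simp [dot3, mul_add, Finset.sum_add_distrib]
          map_smul' := by
            intro r a
            simp only [dot3, Pi.smul_apply, smul_eq_mul, RingHom.id_apply, Finset.mul_sum]
            exact Finset.sum_congr rfl (fun j _ => by ring) } with hL
      set v₀ : V3 := (-α / β i) • (Pi.single i 1 : V3) with hv₀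
      have hLv₀ : L v₀ = -α := by
        simp only [hL, LinearMap.coe_mk, AddHom.coe_mk, hv₀, dot3]
        rw [Finset.sum_eq_single i]
        · simp only [hv₀, Pi.smul_apply, Pi.single_eq_same, smul_eq_mul, mul_one]
          field_simp
        · intro j _ hj; simp [Pi.single_apply, hj]
        · simp
      have hset : {v : V3 | α + dot3 β v + 0 * nsq v = 0}
          = (fun v : V3 => v + -v₀) ⁻¹' (LinearMap.ker L : Set V3) := by
        ext v
        simp only [Set.mem_setOf_eq, Set.mem_preimage, SetLike.mem_coe, LinearMap.mem_ker,
          map_add, map_neg, hLv₀]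
        have : L v = dot3 β v := rfl
        rw [this]; constructor <;> intro h <;> linarith
      rw [hset, measure_preimage_add_right]
      refine Measure.addHaar_submodule volume _ ?_
      intro htop
      have : L β = 0 := by
        have hm : β ∈ LinearMap.ker L := by rw [htop]; trivial
        exact hm
      have hLβ : L β = dot3 β β := rfl
      rw [hLβ] at this
      have : ∑ j, β j * β j > 0 := by
        have : (0:ℝ) < β i * β i := mul_self_pos.mpr hi
        refine Finset.sum_pos' (fun j _ => mul_self_nonneg _) ⟨i, Finset.mem_univ i, this⟩
      rw [dot3] at *
      linarith
  · -- sphere case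
    set w : V3 := (-(2*γ)⁻¹) • β with hw
    have key : ∀ v : V3, α + dot3 β v + γ * nsq v = γ * (nsq (v - w) - (nsq w - α / γ)) := by
      intro v
      have h1 : nsq (v - w) = nsq v - 2 * dot3 w v + nsq w := by
        simp only [nsq, dot3, Pi.sub_apply, Finset.mul_sum, ← Finset.sum_add_distrib,
          ← Finset.sum_sub_distrib]
        exact Finset.sum_congr rfl (fun j _ => by ring)
      have h2 : dot3 w v = (-(2*γ)⁻¹) * dot3 β v := by
        simp only [hw, dot3, Pi.smul_apply, smul_eq_mul, Finset.mul_sum]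
        exact Finset.sum_congr rfl (fun j _ => by ring)
      rw [h1, h2]
      field_simp
      ring
    have hset : {v : V3 | α + dot3 β v + γ * nsq v = 0}
        = (fun v : V3 => v + -w) ⁻¹' {u : V3 | nsq u = nsq w - α / γ} := by
      ext v
      simp only [Set.mem_setOf_eq, Set.mem_preimage, key v, sub_eq_add_neg]
      constructor
      · intro h
        have := mul_eq_zero.mp h
        rcases this with h' | h'
        · exact absurd h' hγ
        · linarith
      · intro h; rw [h]; ring
    rw [hset, measure_preimage_add_right]
    exact nsq_sphere_null _

lemma nsq_nonneg (v : V3) : 0 ≤ nsq v := Finset.sum_nonneg fun i _ => sq_nonneg _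

lemma abs_coord_le (v : V3) (i : Fin 3) : |v i| ≤ 1 + nsq v := by
  have h1 : (v i)^2 ≤ nsq v := by
    unfold nsq
    exact Finset.single_le_sum (fun j _ => sq_nonneg (v j)) (Finset.mem_univ i)
  nlinarith [abs_nonneg (v i), sq_abs (v i)]

lemma dot5_aVec_bound (c : L5) (m : ℝ) (hm : 0 ≤ m) (v : V3) :
    |dot5 c (aVec m v)| ≤ m * (|c.1| + (∑ i, |c.2.1 i|) + |c.2.2|) * (1 + nsq v) := by
  rw [dot5_aVec_eq, abs_mul, abs_of_nonneg hm, mul_assoc]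
  refine mul_le_mul_of_nonneg_left ?_ hm
  have h0 : 0 ≤ nsq v := nsq_nonneg v
  have hd : |dot3 c.2.1 v| ≤ (∑ i, |c.2.1 i|) * (1 + nsq v) := by
    calc |dot3 c.2.1 v| ≤ ∑ i, |c.2.1 i * v i| := Finset.abs_sum_le_sum_abs _ _
    _ ≤ ∑ i, |c.2.1 i| * (1 + nsq v) := by
        refine Finset.sum_le_sum fun i _ => ?_
        rw [abs_mul]
        exact mul_le_mul_of_nonneg_left (abs_coord_le v i) (abs_nonneg _)
    _ = (∑ i, |c.2.1 i|) * (1 + nsq v) := by rw [Finset.sum_mul]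
  have hs : 0 ≤ ∑ i, |c.2.1 i| := Finset.sum_nonneg fun i _ => abs_nonneg _
  calc |c.1 + dot3 c.2.1 v + c.2.2 * nsq v|
      ≤ |c.1| + |dot3 c.2.1 v| + |c.2.2| * nsq v := by
        have := abs_add_le (c.1 + dot3 c.2.1 v) (c.2.2 * nsq v)
        have h2 := abs_add_le c.1 (dot3 c.2.1 v)
        rw [abs_mul, abs_of_nonneg h0] at this
        linarith
    _ ≤ (|c.1| + (∑ i, |c.2.1 i|) + |c.2.2|) * (1 + nsq v) := by nlinarith [abs_nonneg c.1, abs_nonneg c.2.2]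

section species
variable (m : ℝ) (ν g : V3 → ℝ)

lemma integrable_mom_of (hm : 0 < m) (hνm : Measurable ν) (hgm : Measurable g)
    (hν0 : ∀ v, 0 < ν v) (hg0 : ∀ v, 0 ≤ g v)
    (hint : Integrable (fun v => ν v * (1 + nsq v) * g v)) (w : V3 → ℝ)
    (hwm : Measurable w) (hw : ∀ v, |w v| ≤ 1 + nsq v) :
    Integrable (fun v => m * (ν v * w v * g v)) := by
  refine (Integrable.mono' (hint.const_mul m) ?_ ?_)
  · exact (((hνm.mul hwm).mul hgm).const_mul m).aestronglyMeasurable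
  · refine Filter.Eventually.of_forall fun v => ?_
    have : |m * (ν v * w v * g v)| = m * (ν v * |w v| * g v) := by
      rw [abs_mul, abs_of_nonneg hm.le, abs_mul, abs_mul, abs_of_nonneg (hν0 v).le,
        abs_of_nonneg (hg0 v)]
    rw [Real.norm_eq_abs, this]
    have : ν v * |w v| * g v ≤ ν v * (1 + nsq v) * g v := by
      refine mul_le_mul_of_nonneg_right ?_ (hg0 v)
      exact mul_le_mul_of_nonneg_left (hw v) (hν0 v).le
    nlinarith [hm.le]

lemma species_mom (hm : 0 < m) (hνm : Measurable ν) (hgm : Measurable g)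
    (hν0 : ∀ v, 0 < ν v) (hg0 : ∀ v, 0 ≤ g v)
    (hint : Integrable (fun v => ν v * (1 + nsq v) * g v)) (c : L5) :
    ∫ v, ν v * g v * dot5 c (aVec m v)
      = c.1 * (∫ v, m * ν v * g v) + (∑ i, c.2.1 i * ∫ v, m * ν v * v i * g v)
        + c.2.2 * (∫ v, m * ν v * nsq v * g v) := by
  have hone : ∀ v : V3, |(1:ℝ)| ≤ 1 + nsq v := fun v => by
    rw [abs_one]; nlinarith [nsq_nonneg v]
  have hnsq : ∀ v : V3, |nsq v| ≤ 1 + nsq v := fun v => by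
    rw [abs_of_nonneg (nsq_nonneg v)]; linarith [nsq_nonneg v]
  have I0 : Integrable (fun v => m * (ν v * 1 * g v)) :=
    integrable_mom_of m ν g hm hνm hgm hν0 hg0 hint _ measurable_const hone
  have Ii : ∀ i : Fin 3, Integrable (fun v => m * (ν v * v i * g v)) := fun i =>
    integrable_mom_of m ν g hm hνm hgm hν0 hg0 hint _ (measurable_pi_apply i)
      (fun v => abs_coord_le v i)
  have Inq : Integrable (fun v => m * (ν v * nsq v * g v)) :=
    integrable_mom_of m ν g hm hνm hgm hν0 hg0 hint _ (by unfold nsq; fun_prop) hnsq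
  have key : (fun v => ν v * g v * dot5 c (aVec m v)) =
      (fun v => c.1 * (m * (ν v * 1 * g v)) + ((∑ i, c.2.1 i * (m * (ν v * v i * g v)))
        + c.2.2 * (m * (ν v * nsq v * g v)))) := by
    funext v
    rw [dot5_aVec_eq]
    have h1 : ν v * g v * (m * (c.1 + dot3 c.2.1 v + c.2.2 * nsq v))
        = c.1 * (m * (ν v * 1 * g v)) + ((ν v * g v * m) * dot3 c.2.1 v
          + c.2.2 * (m * (ν v * nsq v * g v))) := by ring
    rw [h1, dot3, Finset.mul_sum]
    congr 2
    exact Finset.sum_congr rfl fun i _ => by ring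
  have Isum : Integrable (fun v => ∑ i, c.2.1 i * (m * (ν v * v i * g v))) :=
    integrable_finset_sum _ (fun i _ => (Ii i).const_mul (c.2.1 i))
  have hAdd1 : ∫ v, (c.1 * (m * (ν v * 1 * g v)) + ((∑ i, c.2.1 i * (m * (ν v * v i * g v)))
        + c.2.2 * (m * (ν v * nsq v * g v))))
      = (∫ v, c.1 * (m * (ν v * 1 * g v)))
        + ∫ v, ((∑ i, c.2.1 i * (m * (ν v * v i * g v))) + c.2.2 * (m * (ν v * nsq v * g v))) :=
    integral_add (I0.const_mul c.1) (Isum.add (Inq.const_mul c.2.2))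
  have hAdd2 : ∫ v, ((∑ i, c.2.1 i * (m * (ν v * v i * g v))) + c.2.2 * (m * (ν v * nsq v * g v)))
      = (∫ v, ∑ i, c.2.1 i * (m * (ν v * v i * g v))) + ∫ v, c.2.2 * (m * (ν v * nsq v * g v)) :=
    integral_add Isum (Inq.const_mul c.2.2)
  rw [key, hAdd1, hAdd2, integral_finset_sum _ (fun i _ => (Ii i).const_mul (c.2.1 i))]
  simp only [MeasureTheory.integral_const_mul]
  have e0 : m * ∫ v, ν v * 1 * g v = ∫ v, m * ν v * g v := by
    rw [← MeasureTheory.integral_const_mul]; congr 1; funext v; ring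
  have ei : ∀ i : Fin 3, m * ∫ v, ν v * v i * g v = ∫ v, m * ν v * v i * g v := by
    intro i; rw [← MeasureTheory.integral_const_mul]; congr 1; funext v; ring
  have enq : m * ∫ v, ν v * nsq v * g v = ∫ v, m * ν v * nsq v * g v := by
    rw [← MeasureTheory.integral_const_mul]; congr 1; funext v; ring
  rw [e0, enq]
  have hsum : (∑ i, c.2.1 i * (m * ∫ v, ν v * v i * g v))
      = ∑ i, c.2.1 i * ∫ v, m * ν v * v i * g v :=
    Finset.sum_congr rfl fun i _ => by rw [ei i]
  rw [hsum]; ring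
end species

lemma exp_beats_linear (K ε c C : ℝ) (hK : 0 < K) (hε : 0 < ε) :
    Tendsto (fun s => K * Real.exp (s * ε) - (s * c + C)) atTop atTop := by
  have h1 : Tendsto (fun s : ℝ => (s * c + C) * Real.exp (-(s * ε))) atTop (𝓝 0) := by
    have hx : Tendsto (fun s : ℝ => s * ε) atTop atTop :=
      Tendsto.atTop_mul_const hε tendsto_id
    have hpow := (tendsto_pow_mul_exp_neg_atTop_nhds_zero 1).comp hx
    have hexp : Tendsto (fun s : ℝ => Real.exp (-(s * ε))) atTop (𝓝 0) :=
      (Real.tendsto_exp_atBot).comp (tendsto_neg_atBot_iff.mpr hx)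
    have : (fun s : ℝ => (s * c + C) * Real.exp (-(s * ε)))
        = fun s => (c / ε) * ((s * ε) ^ 1 * Real.exp (-(s * ε))) + C * Real.exp (-(s * ε)) := by
      funext s; field_simp
    rw [this]
    have := (hpow.const_mul (c / ε)).add (hexp.const_mul C)
    simpa using this
  have h2 : Tendsto (fun s : ℝ => K - (s * c + C) * Real.exp (-(s * ε))) atTop (𝓝 K) := by
    simpa using (tendsto_const_nhds (x := K)).sub h1
  have h3 : Tendsto (fun s : ℝ => Real.exp (s * ε)) atTop atTop :=
    Real.tendsto_exp_atTop.comp (Tendsto.atTop_mul_const hε tendsto_id)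
  have h4 := Filter.Tendsto.atTop_mul_pos hK h3 h2
  refine h4.congr' ?_
  filter_upwards with s
  have : Real.exp (s * ε) * ((s * c + C) * Real.exp (-(s * ε))) = s * c + C := by
    rw [mul_comm (Real.exp (s * ε)), mul_assoc, ← Real.exp_add]
    simp
  rw [mul_sub, this]
  ring

lemma lint_ofReal_eq_nnnorm {α : Type*} [MeasurableSpace α] (μ : MeasureTheory.Measure α)
    (f : α → ℝ) (hf0 : ∀ v, 0 ≤ f v) :
    ∫⁻ v, ENNReal.ofReal (f v) ∂μ = ∫⁻ v, ‖f v‖₊ ∂μ :=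
  lintegral_congr fun v => (Real.enorm_eq_ofReal (hf0 v)).symm


lemma tendsto_boundary {ν A B : V3 → ℝ} (hν : Measurable ν) (hν0 : ∀ v, 0 ≤ ν v)
    (hA : Continuous A) (hB : Continuous B) {β : ℝ}
    (hint : ∀ s < β, Integrable (fun v => ν v * Real.exp (A v + s * B v)))
    (hni : ¬ Integrable (fun v => ν v * Real.exp (A v + β * B v))) :
    Tendsto (fun s => ∫ v, ν v * Real.exp (A v + s * B v)) (𝓝[<] β) atTop := by
  have hmeas : ∀ s : ℝ, Measurable (fun v => ν v * Real.exp (A v + s * B v)) := fun s =>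
    hν.mul (Real.continuous_exp.comp (hA.add (continuous_const.mul hB))).measurable
  have hnn : ∀ s : ℝ, ∀ v, 0 ≤ ν v * Real.exp (A v + s * B v) := fun s v =>
    mul_nonneg (hν0 v) (Real.exp_pos _).le
  set F : ℝ → V3 → ENNReal := fun s v => ENNReal.ofReal (ν v * Real.exp (A v + s * B v))
    with hF
  have hFmeas : ∀ s, Measurable (F s) := fun s => ENNReal.measurable_ofReal.comp (hmeas s)
  have htop : (∫⁻ v, F β v) = ⊤ := by
    by_contra h
    refine hni ⟨(hmeas β).aestronglyMeasurable, ?_⟩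
    rw [MeasureTheory.hasFiniteIntegral_iff_ofReal (Filter.Eventually.of_forall (hnn β))]
    exact lt_top_iff_ne_top.mpr h
  rw [tendsto_iff_seq_tendsto]
  intro u hu
  have hub : Tendsto u atTop (𝓝 β) := hu.mono_right nhdsWithin_le_nhds
  have humem : ∀ᶠ n in atTop, u n < β := hu.eventually_mem self_mem_nhdsWithin
  have hFatou : (∫⁻ v, F β v) ≤ liminf (fun n => ∫⁻ v, F (u n) v) atTop := by
    have hlim := MeasureTheory.lintegral_liminf_le (μ := volume) (u := atTop) (fun n => hFmeas (u n))
    refine le_trans (le_of_eq ?_) hlim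
    refine lintegral_congr fun v => ?_
    have hcont : Continuous fun s : ℝ => F s v :=
      ENNReal.continuous_ofReal.comp (by fun_prop)
    exact ((hcont.tendsto β).comp hub).liminf_eq.symm
  rw [htop, top_le_iff] at hFatou
  rw [tendsto_atTop]
  intro M
  have hlt : ∀ᶠ n in atTop, ENNReal.ofReal M < ∫⁻ v, F (u n) v := by
    refine eventually_lt_of_lt_liminf ?_
    rw [hFatou]
    exact ENNReal.ofReal_lt_top
  filter_upwards [hlt, humem] with n h1 h2
  have hig := hint (u n) h2
  have heq : ∫ v, ν v * Real.exp (A v + u n * B v) = (∫⁻ v, F (u n) v).toReal := by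
    rw [MeasureTheory.integral_eq_lintegral_of_nonneg_ae
      (Filter.Eventually.of_forall (hnn (u n))) (hmeas (u n)).aestronglyMeasurable]
  have hne : (∫⁻ v, F (u n) v) ≠ ⊤ := by
    have := (MeasureTheory.hasFiniteIntegral_iff_ofReal
      (Filter.Eventually.of_forall (hnn (u n)))).mp hig.hasFiniteIntegral
    exact this.ne
  rw [Function.comp_apply, heq]
  calc M ≤ (ENNReal.ofReal M).toReal := by
        rw [ENNReal.toReal_ofReal']
        exact le_max_left _ _
    _ ≤ (∫⁻ v, F (u n) v).toReal := ENNReal.toReal_mono hne h1.le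

lemma exp_growth_case (ν A B : V3 → ℝ) (hν : Measurable ν) (hν0 : ∀ v, 0 < ν v)
    (hA : Continuous A) (hB : Continuous B)
    (hint : ∀ s : ℝ, 0 ≤ s → Integrable (fun v => ν v * Real.exp (A v + s * B v)))
    (hpos : volume {v | 0 < B v} ≠ 0) :
    ∃ K ε : ℝ, 0 < K ∧ 0 < ε ∧
      ∀ s : ℝ, 0 ≤ s → K * Real.exp (s * ε) ≤ ∫ v, ν v * Real.exp (A v + s * B v) := by
  have hcover : {v : V3 | 0 < B v} = ⋃ n : ℕ, {v : V3 | 1 / (n + 1 : ℝ) ≤ B v} := by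
    ext v
    simp only [Set.mem_setOf_eq, Set.mem_iUnion]
    constructor
    · intro h
      obtain ⟨n, hn⟩ := exists_nat_one_div_lt h
      exact ⟨n, hn.le⟩
    · rintro ⟨n, hn⟩
      calc (0:ℝ) < 1 / (n + 1 : ℝ) := by positivity
      _ ≤ B v := hn
  obtain ⟨n, hn⟩ : ∃ n : ℕ, volume {v : V3 | 1 / (n + 1 : ℝ) ≤ B v} ≠ 0 := by
    by_contra h
    push_neg at h
    exact hpos (by rw [hcover]; exact measure_iUnion_null_iff.mpr h)
  set ε : ℝ := 1 / (n + 1 : ℝ) with hε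
  have hεpos : 0 < ε := by positivity
  set S : Set V3 := {v : V3 | ε ≤ B v} with hS
  have hSmeas : MeasurableSet S := measurableSet_le measurable_const hB.measurable
  have hintA : Integrable (fun v => ν v * Real.exp (A v)) := by
    have := hint 0 le_rfl
    simpa using this
  set K : ℝ := ∫ v in S, ν v * Real.exp (A v) with hK
  have hKpos : 0 < K := by
    rw [hK, setIntegral_pos_iff_support_of_nonneg_ae]
    · have hsupp : Function.support (fun v => ν v * Real.exp (A v)) = Set.univ := by
        ext v; simp only [Function.mem_support, Set.mem_univ, iff_true]
        exact ne_of_gt (mul_pos (hν0 v) (Real.exp_pos _))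
      rw [hsupp, Set.univ_inter]
      exact (lt_of_le_of_ne zero_le (Ne.symm hn))
    · exact Filter.Eventually.of_forall fun v => mul_nonneg (hν0 v).le (Real.exp_pos _).le
    · exact hintA.integrableOn
  refine ⟨K, ε, hKpos, hεpos, fun s hs => ?_⟩
  have h1 : ∫ v in S, Real.exp (s * ε) * (ν v * Real.exp (A v))
      ≤ ∫ v in S, ν v * Real.exp (A v + s * B v) := by
    refine setIntegral_mono_on (hintA.const_mul _).integrableOn
      (hint s hs).integrableOn hSmeas fun v hv => ?_
    rw [Real.exp_add, show ν v * (Real.exp (A v) * Real.exp (s * B v))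
      = Real.exp (s * B v) * (ν v * Real.exp (A v)) by ring]
    refine mul_le_mul_of_nonneg_right ?_ (mul_nonneg (hν0 v).le (Real.exp_pos _).le)
    exact Real.exp_le_exp.mpr (mul_le_mul_of_nonneg_left hv hs)
  have h2 : ∫ v in S, ν v * Real.exp (A v + s * B v) ≤ ∫ v, ν v * Real.exp (A v + s * B v) :=
    setIntegral_le_integral (hint s hs)
      (Filter.Eventually.of_forall fun v => mul_nonneg (hν0 v).le (Real.exp_pos _).le)
  calc K * Real.exp (s * ε) = ∫ v in S, Real.exp (s * ε) * (ν v * Real.exp (A v)) := by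
        rw [MeasureTheory.integral_const_mul]; ring
    _ ≤ _ := le_trans h1 h2

lemma tendsto_sum_growth (φa φb : ℝ → ℝ) (K ε c C : ℝ) (hK : 0 < K) (hε : 0 < ε)
    (hgrow : ∀ s : ℝ, 0 ≤ s → K * Real.exp (s * ε) ≤ φa s) (hother : ∀ s, 0 ≤ φb s) :
    Tendsto (fun s => φa s + φb s - (s * c + C)) atTop atTop := by
  refine tendsto_atTop_mono' atTop ?_ (exp_beats_linear K ε c C hK hε)
  filter_upwards [eventually_ge_atTop (0:ℝ)] with s hs
  have := hgrow s hs
  have := hother s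
  linarith

lemma coercive_atTop
    (ν₁ ν₂ : V3 → ℝ) (hν₁ : Measurable ν₁) (hν₂ : Measurable ν₂)
    (hν₁0 : ∀ v, 0 < ν₁ v) (hν₂0 : ∀ v, 0 < ν₂ v)
    (A₁ B₁ A₂ B₂ : V3 → ℝ) (hA₁ : Continuous A₁) (hB₁ : Continuous B₁)
    (hA₂ : Continuous A₂) (hB₂ : Continuous B₂)
    (hint₁ : ∀ s : ℝ, 0 ≤ s → Integrable (fun v => ν₁ v * Real.exp (A₁ v + s * B₁ v)))
    (hint₂ : ∀ s : ℝ, 0 ≤ s → Integrable (fun v => ν₂ v * Real.exp (A₂ v + s * B₂ v)))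
    (g₁ g₂ : V3 → ℝ) (hg₁0 : ∀ v, 0 ≤ g₁ v) (hg₂0 : ∀ v, 0 ≤ g₂ v)
    (hg₁ne : ¬ g₁ =ᵐ[volume] (fun _ => (0:ℝ))) (hg₂ne : ¬ g₂ =ᵐ[volume] (fun _ => (0:ℝ)))
    (hI₁ : Integrable (fun v => ν₁ v * g₁ v * B₁ v))
    (hI₂ : Integrable (fun v => ν₂ v * g₂ v * B₂ v))
    (hnull : volume {v | B₁ v = 0} = 0 ∨ volume {v | B₂ v = 0} = 0)
    (C c : ℝ)
    (hc : c = (∫ v, ν₁ v * g₁ v * B₁ v) + ∫ v, ν₂ v * g₂ v * B₂ v) :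
    Tendsto (fun s => (∫ v, ν₁ v * Real.exp (A₁ v + s * B₁ v))
      + (∫ v, ν₂ v * Real.exp (A₂ v + s * B₂ v)) - (s * c + C)) atTop atTop := by
  have hφ₁0 : ∀ s : ℝ, 0 ≤ ∫ v, ν₁ v * Real.exp (A₁ v + s * B₁ v) := fun s =>
    integral_nonneg fun v => mul_nonneg (hν₁0 v).le (Real.exp_pos _).le
  have hφ₂0 : ∀ s : ℝ, 0 ≤ ∫ v, ν₂ v * Real.exp (A₂ v + s * B₂ v) := fun s =>
    integral_nonneg fun v => mul_nonneg (hν₂0 v).le (Real.exp_pos _).le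
  by_cases hpos₁ : volume {v | 0 < B₁ v} ≠ 0
  · obtain ⟨K, ε, hK, hε, hgrow⟩ :=
      exp_growth_case ν₁ A₁ B₁ hν₁ hν₁0 hA₁ hB₁ hint₁ hpos₁
    exact tendsto_sum_growth _ _ K ε c C hK hε hgrow hφ₂0
  by_cases hpos₂ : volume {v | 0 < B₂ v} ≠ 0
  · obtain ⟨K, ε, hK, hε, hgrow⟩ :=
      exp_growth_case ν₂ A₂ B₂ hν₂ hν₂0 hA₂ hB₂ hint₂ hpos₂
    have := tendsto_sum_growth _ _ K ε c C hK hε hgrow hφ₁0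
    refine this.congr fun s => by ring
  push_neg at hpos₁ hpos₂
  -- B₁ ≤ 0 a.e., B₂ ≤ 0 a.e.
  have hB₁le : ∀ᵐ v, B₁ v ≤ 0 := by
    have : ∀ᵐ v, v ∉ {v : V3 | 0 < B₁ v} := (MeasureTheory.measure_eq_zero_iff_ae_notMem).mp hpos₁
    filter_upwards [this] with v hv
    simpa using hv
  have hB₂le : ∀ᵐ v, B₂ v ≤ 0 := by
    have : ∀ᵐ v, v ∉ {v : V3 | 0 < B₂ v} := (MeasureTheory.measure_eq_zero_iff_ae_notMem).mp hpos₂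
    filter_upwards [this] with v hv
    simpa using hv
  have hI₁le : (∫ v, ν₁ v * g₁ v * B₁ v) ≤ 0 := by
    refine integral_nonpos_of_ae ?_
    filter_upwards [hB₁le] with v hv
    exact mul_nonpos_of_nonneg_of_nonpos (mul_nonneg (hν₁0 v).le (hg₁0 v)) hv
  have hI₂le : (∫ v, ν₂ v * g₂ v * B₂ v) ≤ 0 := by
    refine integral_nonpos_of_ae ?_
    filter_upwards [hB₂le] with v hv
    exact mul_nonpos_of_nonneg_of_nonpos (mul_nonneg (hν₂0 v).le (hg₂0 v)) hv
  rcases lt_or_eq_of_le (hc ▸ add_nonpos hI₁le hI₂le) with hclt | hceq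
  · -- c < 0 : linear growth
    have hlin : Tendsto (fun s : ℝ => -(s * c + C)) atTop atTop := by
      have : Tendsto (fun s : ℝ => s * (-c)) atTop atTop :=
        Tendsto.atTop_mul_const (by linarith) tendsto_id
      have := this.atTop_add (tendsto_const_nhds (x := -C))
      refine this.congr fun s => by ring
    refine tendsto_atTop_mono' atTop ?_ hlin
    filter_upwards with s
    have := hφ₁0 s; have := hφ₂0 s
    linarith
  · -- c = 0 : contradiction
    exfalso
    have hsum : (∫ v, ν₁ v * g₁ v * B₁ v) + (∫ v, ν₂ v * g₂ v * B₂ v) = 0 := by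
      rw [← hc]; linarith [hceq]
    have hI₁eq : (∫ v, ν₁ v * g₁ v * B₁ v) = 0 := by linarith
    have hI₂eq : (∫ v, ν₂ v * g₂ v * B₂ v) = 0 := by linarith
    have hN₁ : Integrable (fun v => -(ν₁ v * g₁ v * B₁ v)) volume := hI₁.neg
    have hz₁ : ∫ v, -(ν₁ v * g₁ v * B₁ v) = 0 := by
      rw [MeasureTheory.integral_neg, hI₁eq, neg_zero]
    have hp₁ : 0 ≤ᵐ[volume] (fun v => -(ν₁ v * g₁ v * B₁ v)) := by
      filter_upwards [hB₁le] with v hv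
      simp only [Pi.zero_apply, neg_nonneg]
      exact mul_nonpos_of_nonneg_of_nonpos (mul_nonneg (hν₁0 v).le (hg₁0 v)) hv
    have hae₁ := (MeasureTheory.integral_eq_zero_iff_of_nonneg_ae hp₁ hN₁).mp hz₁
    have hN₂ : Integrable (fun v => -(ν₂ v * g₂ v * B₂ v)) volume := hI₂.neg
    have hz₂ : ∫ v, -(ν₂ v * g₂ v * B₂ v) = 0 := by
      rw [MeasureTheory.integral_neg, hI₂eq, neg_zero]
    have hp₂ : 0 ≤ᵐ[volume] (fun v => -(ν₂ v * g₂ v * B₂ v)) := by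
      filter_upwards [hB₂le] with v hv
      simp only [Pi.zero_apply, neg_nonneg]
      exact mul_nonpos_of_nonneg_of_nonpos (mul_nonneg (hν₂0 v).le (hg₂0 v)) hv
    have hae₂ := (MeasureTheory.integral_eq_zero_iff_of_nonneg_ae hp₂ hN₂).mp hz₂
    rcases hnull with hn1 | hn2
    · refine hg₁ne ?_
      have hBne : ∀ᵐ v, v ∉ {v : V3 | B₁ v = 0} :=
        MeasureTheory.measure_eq_zero_iff_ae_notMem.mp hn1
      filter_upwards [hae₁, hBne] with v h1 h2
      have h2 : B₁ v ≠ 0 := h2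
      simp only [Pi.zero_apply, neg_eq_zero] at h1
      rcases mul_eq_zero.mp h1 with h | h
      · rcases mul_eq_zero.mp h with h | h
        · exact absurd h (hν₁0 v).ne'
        · exact h
      · exact absurd h h2
    · refine hg₂ne ?_
      have hBne : ∀ᵐ v, v ∉ {v : V3 | B₂ v = 0} :=
        MeasureTheory.measure_eq_zero_iff_ae_notMem.mp hn2
      filter_upwards [hae₂, hBne] with v h1 h2
      have h2 : B₂ v ≠ 0 := h2
      simp only [Pi.zero_apply, neg_eq_zero] at h1
      rcases mul_eq_zero.mp h1 with h | h
      · rcases mul_eq_zero.mp h with h | h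
        · exact absurd h (hν₂0 v).ne'
        · exact h
      · exact absurd h h2

lemma species_convex (ν A B : V3 → ℝ) (hν0 : ∀ v, 0 < ν v)
    {x y t : ℝ} (ht0 : 0 < t) (ht1 : t < 1)
    (hx : Integrable (fun v => ν v * Real.exp (A v + x * B v)))
    (hy : Integrable (fun v => ν v * Real.exp (A v + y * B v)))
    (hz : Integrable (fun v => ν v * Real.exp (A v + (t * x + (1 - t) * y) * B v))) :
    (∫ v, ν v * Real.exp (A v + (t * x + (1 - t) * y) * B v))
      ≤ t * (∫ v, ν v * Real.exp (A v + x * B v))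
        + (1 - t) * ∫ v, ν v * Real.exp (A v + y * B v) ∧
    (x ≠ y → volume {v : V3 | B v = 0} = 0 →
      (∫ v, ν v * Real.exp (A v + (t * x + (1 - t) * y) * B v))
        < t * (∫ v, ν v * Real.exp (A v + x * B v))
          + (1 - t) * ∫ v, ν v * Real.exp (A v + y * B v)) := by
  set z : ℝ := t * x + (1 - t) * y with hzdef
  set h : V3 → ℝ := fun v =>
    t * (ν v * Real.exp (A v + x * B v)) + (1 - t) * (ν v * Real.exp (A v + y * B v))
      - ν v * Real.exp (A v + z * B v) with hh
  have hpt : ∀ v, Real.exp (A v + z * B v)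
      ≤ t * Real.exp (A v + x * B v) + (1 - t) * Real.exp (A v + y * B v) := by
    intro v
    have := convexOn_exp.2 (Set.mem_univ (A v + x * B v)) (Set.mem_univ (A v + y * B v))
      ht0.le (by linarith : (0:ℝ) ≤ 1 - t) (by ring : t + (1 - t) = 1)
    have harg : t • (A v + x * B v) + (1 - t) • (A v + y * B v) = A v + z * B v := by
      simp only [smul_eq_mul, hzdef]; ring
    rw [harg] at this
    simpa using this
  have hnn : ∀ v, 0 ≤ h v := by
    intro v
    have := hpt v
    have hv := (hν0 v).le
    simp only [hh]
    nlinarith [hpt v, (hν0 v).le]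
  have hint : Integrable h := ((hx.const_mul t).add (hy.const_mul (1 - t))).sub hz
  have hIeq : ∫ v, h v = t * (∫ v, ν v * Real.exp (A v + x * B v))
      + (1 - t) * (∫ v, ν v * Real.exp (A v + y * B v))
      - ∫ v, ν v * Real.exp (A v + z * B v) := by
    have e1 : ∫ v, ((t * (ν v * Real.exp (A v + x * B v))
          + (1 - t) * (ν v * Real.exp (A v + y * B v))) - ν v * Real.exp (A v + z * B v))
        = (∫ v, (t * (ν v * Real.exp (A v + x * B v))
            + (1 - t) * (ν v * Real.exp (A v + y * B v)))) - ∫ v, ν v * Real.exp (A v + z * B v) :=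
      MeasureTheory.integral_sub ((hx.const_mul t).add (hy.const_mul (1 - t))) hz
    have e2 : ∫ v, (t * (ν v * Real.exp (A v + x * B v))
          + (1 - t) * (ν v * Real.exp (A v + y * B v)))
        = (∫ v, t * (ν v * Real.exp (A v + x * B v)))
          + ∫ v, (1 - t) * (ν v * Real.exp (A v + y * B v)) :=
      MeasureTheory.integral_add (hx.const_mul t) (hy.const_mul (1 - t))
    simp only [hh]
    rw [e1, e2, MeasureTheory.integral_const_mul, MeasureTheory.integral_const_mul]
  constructor
  · have h0 : 0 ≤ ∫ v, h v := integral_nonneg hnn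
    rw [hIeq] at h0
    linarith
  · intro hxy hBnull
    have hptstrict : ∀ v, B v ≠ 0 → 0 < h v := by
      intro v hBv
      have hne : A v + x * B v ≠ A v + y * B v := by
        intro heq
        apply hxy
        have : (x - y) * B v = 0 := by linarith
        rcases mul_eq_zero.mp this with h' | h'
        · linarith
        · exact absurd h' hBv
      have := strictConvexOn_exp.2 (Set.mem_univ (A v + x * B v))
        (Set.mem_univ (A v + y * B v)) hne ht0 (by linarith : (0:ℝ) < 1 - t)
        (by ring : t + (1 - t) = 1)
      have harg : t • (A v + x * B v) + (1 - t) • (A v + y * B v) = A v + z * B v := by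
        simp only [smul_eq_mul, hzdef]; ring
      rw [harg] at this
      simp only [smul_eq_mul] at this
      have := (hν0 v)
      simp only [hh]
      nlinarith
    have hsupp : 0 < volume (Function.support h) := by
      have hsub : {v : V3 | B v ≠ 0} ⊆ Function.support h := fun v hv =>
        (hptstrict v hv).ne'
      have huniv : (0:ENNReal) < volume (Set.univ : Set V3) :=
        IsOpen.measure_pos volume isOpen_univ ⟨0, trivial⟩
      have hcompl : 0 < volume {v : V3 | B v ≠ 0} := by
        by_contra hle
        push_neg at hle
        have h0 : volume {v : V3 | B v ≠ 0} = 0 := le_antisymm hle zero_le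
        have : volume (Set.univ : Set V3) ≤ volume {v : V3 | B v ≠ 0}
            + volume {v : V3 | B v = 0} := by
          refine le_trans (measure_mono ?_) (measure_union_le _ _)
          intro v _
          by_cases hB : B v = 0
          · exact Or.inr hB
          · exact Or.inl hB
        rw [h0, hBnull, add_zero] at this
        exact absurd this huniv.not_ge
      exact lt_of_lt_of_le hcompl (measure_mono hsub)
    have hpos : 0 < ∫ v, h v := by
      rw [MeasureTheory.integral_pos_iff_support_of_nonneg_ae
        (Filter.Eventually.of_forall hnn) hint]
      exact hsupp
    rw [hIeq] at hpos
    linarith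

lemma dot3_add_smul (a b c : V3) (s : ℝ) : dot3 (a + s • b) c = dot3 a c + s * dot3 b c := by
  simp only [dot3, Pi.add_apply, Pi.smul_apply, smul_eq_mul, add_mul, Finset.sum_add_distrib,
    Finset.mul_sum]
  congr 1
  exact Finset.sum_congr rfl fun i _ => by ring

lemma dot6_add_smul (l ξ ρ : L6) (s : ℝ) :
    dot6 (l + s • ξ) ρ = dot6 l ρ + s * dot6 ξ ρ := by
  simp only [dot6, Prod.fst_add, Prod.snd_add, Prod.smul_fst, Prod.smul_snd, smul_eq_mul,
    dot3_add_smul]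
  ring

lemma expA_add_smul (m : ℝ) (c d : L5) (s : ℝ) (v : V3) :
    expA m (c + s • d) v = Real.exp (dot5 c (aVec m v) + s * dot5 d (aVec m v)) := by
  rw [expA, dot5_add_left, dot5_smul_left]

lemma comp1_add_smul (l ξ : L6) (s : ℝ) : comp1 (l + s • ξ) = comp1 l + s • comp1 ξ := rfl
lemma comp2_add_smul (l ξ : L6) (s : ℝ) : comp2 (l + s • ξ) = comp2 l + s • comp2 ξ := rfl

lemma comp1_snd_snd (l ξ : L6) (s : ℝ) : (comp1 (l + s • ξ)).2.2 = l.2.2.2 + s * ξ.2.2.2 := rfl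
lemma comp2_snd_snd (l ξ : L6) (s : ℝ) : (comp2 (l + s • ξ)).2.2 = l.2.2.2 + s * ξ.2.2.2 := rfl

lemma zbar_eq (m₁ m₂ : ℝ) (ν₁₂ ν₂₁ : V3 → ℝ) (l ξ ρ : L6) (s : ℝ) :
    zbar m₁ m₂ ν₁₂ ν₂₁ (l + s • ξ) ρ
      = (∫ v, ν₁₂ v * Real.exp (dot5 (comp1 l) (aVec m₁ v) + s * dot5 (comp1 ξ) (aVec m₁ v)))
        + (∫ v, ν₂₁ v * Real.exp (dot5 (comp2 l) (aVec m₂ v) + s * dot5 (comp2 ξ) (aVec m₂ v)))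
        - (s * dot6 ξ ρ + dot6 l ρ) := by
  rw [zbar, PhiMix, dot6_add_smul]
  have h1 : (fun v => ν₁₂ v * expA m₁ (comp1 (l + s • ξ)) v)
      = fun v => ν₁₂ v * Real.exp (dot5 (comp1 l) (aVec m₁ v) + s * dot5 (comp1 ξ) (aVec m₁ v)) := by
    funext v; rw [comp1_add_smul, expA_add_smul]
  have h2 : (fun v => ν₂₁ v * expA m₂ (comp2 (l + s • ξ)) v)
      = fun v => ν₂₁ v * Real.exp (dot5 (comp2 l) (aVec m₂ v) + s * dot5 (comp2 ξ) (aVec m₂ v)) := by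
    funext v; rw [comp2_add_smul, expA_add_smul]
  rw [h1, h2]
  ring

lemma dot5_zero_null (c : L5) (hc : c ≠ 0) (m : ℝ) (hm : 0 < m) :
    volume {v : V3 | dot5 c (aVec m v) = 0} = 0 := by
  have hset : {v : V3 | dot5 c (aVec m v) = 0}
      = {v : V3 | c.1 + dot3 c.2.1 v + c.2.2 * nsq v = 0} := by
    ext v
    rw [Set.mem_setOf_eq, Set.mem_setOf_eq, dot5_aVec_eq, mul_eq_zero]
    constructor
    · rintro (h | h)
      · exact absurd h hm.ne'
      · exact h
    · exact Or.inr
  rw [hset]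
  exact quadric_null c hc

lemma comp_ne_zero (ξ : L6) (hξ : ξ ≠ 0) : comp1 ξ ≠ 0 ∨ comp2 ξ ≠ 0 := by
  by_contra h
  push_neg at h
  obtain ⟨h1, h2⟩ := h
  apply hξ
  have e1 : ξ.1 = 0 := congrArg Prod.fst h1
  have e2 : ξ.2.1 = 0 := congrArg Prod.fst h2
  have e3 : ξ.2.2.1 = 0 := congrArg (fun p : L5 => p.2.1) h1
  have e4 : ξ.2.2.2 = 0 := congrArg (fun p : L5 => p.2.2) h1
  have : ξ = (ξ.1, ξ.2.1, ξ.2.2.1, ξ.2.2.2) := rfl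
  rw [this, e1, e2, e3, e4]
  rfl

lemma dot6_muBar_eq (m₁ m₂ : ℝ) (hm₁ : 0 < m₁) (hm₂ : 0 < m₂) (ν₁₂ ν₂₁ : V3 → ℝ)
    (hν₁₂meas : Measurable ν₁₂) (hν₂₁meas : Measurable ν₂₁)
    (hν₁₂pos : ∀ v, 0 < ν₁₂ v) (hν₂₁pos : ∀ v, 0 < ν₂₁ v)
    (g₁ g₂ : V3 → ℝ) (hg₁meas : Measurable g₁) (hg₂meas : Measurable g₂)
    (hg₁0 : ∀ v, 0 ≤ g₁ v) (hg₂0 : ∀ v, 0 ≤ g₂ v)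
    (hg₁int : Integrable (fun v => ν₁₂ v * (1 + nsq v) * g₁ v))
    (hg₂int : Integrable (fun v => ν₂₁ v * (1 + nsq v) * g₂ v)) (k : L6) :
    dot6 k (muBar m₁ m₂ ν₁₂ ν₂₁ g₁ g₂)
      = (∫ v, ν₁₂ v * g₁ v * dot5 (comp1 k) (aVec m₁ v))
        + ∫ v, ν₂₁ v * g₂ v * dot5 (comp2 k) (aVec m₂ v) := by
  rw [species_mom m₁ ν₁₂ g₁ hm₁ hν₁₂meas hg₁meas hν₁₂pos hg₁0 hg₁int (comp1 k),
    species_mom m₂ ν₂₁ g₂ hm₂ hν₂₁meas hg₂meas hν₂₁pos hg₂0 hg₂int (comp2 k)]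
  simp only [dot6, muBar, comp1, comp2, dot3]
  simp only [mul_add, Finset.sum_add_distrib]
  ring

lemma integrable_g_dot5 (m : ℝ) (hm : 0 < m) (ν g : V3 → ℝ)
    (hνm : Measurable ν) (hgm : Measurable g) (hν0 : ∀ v, 0 < ν v) (hg0 : ∀ v, 0 ≤ g v)
    (hint : Integrable (fun v => ν v * (1 + nsq v) * g v)) (c : L5) :
    Integrable (fun v => ν v * g v * dot5 c (aVec m v)) := by
  set Cc : ℝ := |c.1| + (∑ i, |c.2.1 i|) + |c.2.2| with hCc
  have hCc0 : 0 ≤ Cc := by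
    have : 0 ≤ ∑ i, |c.2.1 i| := Finset.sum_nonneg fun i _ => abs_nonneg _
    have := abs_nonneg c.1; have := abs_nonneg c.2.2
    rw [hCc]; linarith
  refine Integrable.mono' (hint.const_mul (m * Cc)) ?_ ?_
  · refine (((hνm.mul hgm).mul ?_)).aestronglyMeasurable
    exact (aVec_continuous m c).measurable
  · refine Filter.Eventually.of_forall fun v => ?_
    rw [Real.norm_eq_abs, abs_mul, abs_mul, abs_of_nonneg (hν0 v).le, abs_of_nonneg (hg0 v)]
    have hb := dot5_aVec_bound c m hm.le v
    calc ν v * g v * |dot5 c (aVec m v)| ≤ ν v * g v * (m * Cc * (1 + nsq v)) := by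
          refine mul_le_mul_of_nonneg_left hb (mul_nonneg (hν0 v).le (hg0 v))
      _ = m * Cc * (ν v * (1 + nsq v) * g v) := by ring

lemma right_barrier
    (m₁ m₂ : ℝ) (hm₁ : 0 < m₁) (hm₂ : 0 < m₂)
    (ν₁₂ ν₂₁ : V3 → ℝ) (hν₁₂meas : Measurable ν₁₂) (hν₂₁meas : Measurable ν₂₁)
    (hν₁₂pos : ∀ v, 0 < ν₁₂ v) (hν₂₁pos : ∀ v, 0 < ν₂₁ v)
    (hass₁ : ∀ l : L5, Integrable (fun v => ν₁₂ v * expA m₁ l v) ↔ l.2.2 < 0)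
    (hass₂ : ∀ l : L5, Integrable (fun v => ν₂₁ v * expA m₂ l v) ↔ l.2.2 < 0)
    (l : L6) (hl : l.2.2.2 < 0) (ξ : L6) (hξ : comp1 ξ ≠ 0 ∨ comp2 ξ ≠ 0)
    (g₁ g₂ : V3 → ℝ) (hg₁meas : Measurable g₁) (hg₂meas : Measurable g₂)
    (hg₁0 : ∀ v, 0 ≤ g₁ v) (hg₂0 : ∀ v, 0 ≤ g₂ v)
    (hg₁ne : ¬ g₁ =ᵐ[volume] (fun _ => (0 : ℝ)))
    (hg₂ne : ¬ g₂ =ᵐ[volume] (fun _ => (0 : ℝ)))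
    (hg₁int : Integrable (fun v => ν₁₂ v * (1 + nsq v) * g₁ v))
    (hg₂int : Integrable (fun v => ν₂₁ v * (1 + nsq v) * g₂ v)) :
    ∃ b : ℝ, 0 < b ∧ l.2.2.2 + b * ξ.2.2.2 < 0 ∧
      ∀ s : ℝ, l.2.2.2 + s * ξ.2.2.2 < 0 → b < s →
        zbar m₁ m₂ ν₁₂ ν₂₁ (l + (0:ℝ) • ξ) (muBar m₁ m₂ ν₁₂ ν₂₁ g₁ g₂)
          < zbar m₁ m₂ ν₁₂ ν₂₁ (l + s • ξ) (muBar m₁ m₂ ν₁₂ ν₂₁ g₁ g₂) := by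
  set ρ : L6 := muBar m₁ m₂ ν₁₂ ν₂₁ g₁ g₂ with hρ
  set A₁ : V3 → ℝ := fun v => dot5 (comp1 l) (aVec m₁ v) with hA₁
  set B₁ : V3 → ℝ := fun v => dot5 (comp1 ξ) (aVec m₁ v) with hB₁
  set A₂ : V3 → ℝ := fun v => dot5 (comp2 l) (aVec m₂ v) with hA₂
  set B₂ : V3 → ℝ := fun v => dot5 (comp2 ξ) (aVec m₂ v) with hB₂
  set f : ℝ → ℝ := fun s => zbar m₁ m₂ ν₁₂ ν₂₁ (l + s • ξ) ρ with hf
  have hfeq : ∀ s, f s = (∫ v, ν₁₂ v * Real.exp (A₁ v + s * B₁ v))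
      + (∫ v, ν₂₁ v * Real.exp (A₂ v + s * B₂ v)) - (s * dot6 ξ ρ + dot6 l ρ) := fun s =>
    zbar_eq m₁ m₂ ν₁₂ ν₂₁ l ξ ρ s
  have hA₁c : Continuous A₁ := aVec_continuous m₁ (comp1 l)
  have hB₁c : Continuous B₁ := aVec_continuous m₁ (comp1 ξ)
  have hA₂c : Continuous A₂ := aVec_continuous m₂ (comp2 l)
  have hB₂c : Continuous B₂ := aVec_continuous m₂ (comp2 ξ)
  have hint₁ : ∀ s : ℝ, l.2.2.2 + s * ξ.2.2.2 < 0 →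
      Integrable (fun v => ν₁₂ v * Real.exp (A₁ v + s * B₁ v)) := by
    intro s hs
    have h := (hass₁ (comp1 (l + s • ξ))).mpr (by rw [comp1_snd_snd]; exact hs)
    refine h.congr (Filter.Eventually.of_forall fun v => ?_)
    simp only [comp1_add_smul, expA_add_smul]
    rfl
  have hint₂ : ∀ s : ℝ, l.2.2.2 + s * ξ.2.2.2 < 0 →
      Integrable (fun v => ν₂₁ v * Real.exp (A₂ v + s * B₂ v)) := by
    intro s hs
    have h := (hass₂ (comp2 (l + s • ξ))).mpr (by rw [comp2_snd_snd]; exact hs)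
    refine h.congr (Filter.Eventually.of_forall fun v => ?_)
    simp only [comp2_add_smul, expA_add_smul]
    rfl
  have hcval : dot6 ξ ρ = (∫ v, ν₁₂ v * g₁ v * B₁ v) + ∫ v, ν₂₁ v * g₂ v * B₂ v :=
    dot6_muBar_eq m₁ m₂ hm₁ hm₂ ν₁₂ ν₂₁ hν₁₂meas hν₂₁meas hν₁₂pos hν₂₁pos g₁ g₂
      hg₁meas hg₂meas hg₁0 hg₂0 hg₁int hg₂int ξ
  have hI₁ : Integrable (fun v => ν₁₂ v * g₁ v * B₁ v) :=
    integrable_g_dot5 m₁ hm₁ ν₁₂ g₁ hν₁₂meas hg₁meas hν₁₂pos hg₁0 hg₁int (comp1 ξ)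
  have hI₂ : Integrable (fun v => ν₂₁ v * g₂ v * B₂ v) :=
    integrable_g_dot5 m₂ hm₂ ν₂₁ g₂ hν₂₁meas hg₂meas hν₂₁pos hg₂0 hg₂int (comp2 ξ)
  have hnull : volume {v : V3 | B₁ v = 0} = 0 ∨ volume {v : V3 | B₂ v = 0} = 0 := by
    rcases hξ with h | h
    · exact Or.inl (dot5_zero_null (comp1 ξ) h m₁ hm₁)
    · exact Or.inr (dot5_zero_null (comp2 ξ) h m₂ hm₂)
  have hφ₂0 : ∀ s : ℝ, 0 ≤ ∫ v, ν₂₁ v * Real.exp (A₂ v + s * B₂ v) := fun s =>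
    integral_nonneg fun v => mul_nonneg (hν₂₁pos v).le (Real.exp_pos _).le
  rcases le_or_gt ξ.2.2.2 0 with hX | hX
  · -- direction unbounded: coercivity
    have hmem : ∀ s : ℝ, 0 ≤ s → l.2.2.2 + s * ξ.2.2.2 < 0 := by
      intro s hs; nlinarith
    have Ht := coercive_atTop ν₁₂ ν₂₁ hν₁₂meas hν₂₁meas hν₁₂pos hν₂₁pos A₁ B₁ A₂ B₂
      hA₁c hB₁c hA₂c hB₂c (fun s hs => hint₁ s (hmem s hs)) (fun s hs => hint₂ s (hmem s hs))
      g₁ g₂ hg₁0 hg₂0 hg₁ne hg₂ne hI₁ hI₂ hnull (dot6 l ρ) (dot6 ξ ρ) hcval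
    have Hf : Tendsto f atTop atTop := Ht.congr fun s => ((hfeq s).symm)
    obtain ⟨R, hR⟩ := eventually_atTop.mp (Hf.eventually_gt_atTop (f 0))
    refine ⟨max R 1, lt_of_lt_of_le one_pos (le_max_right R 1),
      hmem _ (le_trans zero_le_one (le_max_right R 1)), fun s _ hbs => ?_⟩
    exact hR s (le_of_lt (lt_of_le_of_lt (le_max_left R 1) hbs))
  · -- finite boundary
    set β : ℝ := -l.2.2.2 / ξ.2.2.2 with hβ
    have hβpos : 0 < β := div_pos (neg_pos.mpr hl) hX
    have hmemIff : ∀ s : ℝ, (l.2.2.2 + s * ξ.2.2.2 < 0) ↔ s < β := by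
      intro s
      rw [hβ, lt_div_iff₀ hX]
      constructor <;> intro h <;> nlinarith
    have hβeq : l.2.2.2 + β * ξ.2.2.2 = 0 := by
      rw [hβ]; field_simp; ring
    have hnint : ¬ Integrable (fun v => ν₁₂ v * Real.exp (A₁ v + β * B₁ v)) := by
      intro h
      have h' : Integrable (fun v => ν₁₂ v * expA m₁ (comp1 (l + β • ξ)) v) := by
        refine h.congr (Filter.Eventually.of_forall fun v => ?_)
        simp only [comp1_add_smul, expA_add_smul]
        rfl
      have hlt := (hass₁ _).mp h'
      rw [comp1_snd_snd, hβeq] at hlt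
      exact lt_irrefl 0 hlt
    have Hb1 : Tendsto (fun s => ∫ v, ν₁₂ v * Real.exp (A₁ v + s * B₁ v)) (𝓝[<] β) atTop :=
      tendsto_boundary hν₁₂meas (fun v => (hν₁₂pos v).le) hA₁c hB₁c
        (fun s hs => hint₁ s ((hmemIff s).mpr hs)) hnint
    have Hlin : Tendsto (fun s : ℝ => -(s * dot6 ξ ρ + dot6 l ρ)) (𝓝[<] β)
        (𝓝 (-(β * dot6 ξ ρ + dot6 l ρ))) :=
      (Continuous.tendsto (by fun_prop) β).mono_left nhdsWithin_le_nhds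
    have Hb : Tendsto f (𝓝[<] β) atTop := by
      refine tendsto_atTop_mono' _ ?_ (Hb1.atTop_add Hlin)
      filter_upwards with s
      rw [hfeq s]
      have := hφ₂0 s
      linarith
    have hev := Hb.eventually_gt_atTop (f 0)
    rw [Filter.eventually_iff] at hev
    obtain ⟨b', hb'β, hb'⟩ := mem_nhdsLT_iff_exists_Ioo_subset.mp hev
    refine ⟨max b' (β/2), lt_of_lt_of_le (half_pos hβpos) (le_max_right _ _),
      (hmemIff _).mpr (max_lt hb'β (half_lt_self hβpos)), fun s hs hbs => ?_⟩
    exact hb' ⟨lt_of_le_of_lt (le_max_left _ _) hbs, (hmemIff s).mp hs⟩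

/-- for `λ ∈ Λ̄`, a unit direction `ξ ∈ ℝ⁶`, and `ρ̄ = μ̄(g₁,g₂)`
with admissible `g₁, g₂`, the function `s ↦ z̄(λ + sξ; ρ̄)` attains its minimum
at a unique point of the open interval
`Ī(ξ,λ) = {s : (λ+sξ)¹ ∈ Λ and (λ+sξ)² ∈ Λ}`; in particular the minimum is not
attained at the endpoints. -/
theorem mixture_min_on_line
    (m₁ m₂ : ℝ) (hm₁ : 0 < m₁) (hm₂ : 0 < m₂)
    (ν₁₂ ν₂₁ : V3 → ℝ) (hν₁₂meas : Measurable ν₁₂) (hν₂₁meas : Measurable ν₂₁)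
    (hν₁₂pos : ∀ v, 0 < ν₁₂ v) (hν₂₁pos : ∀ v, 0 < ν₂₁ v)
    (hass₁ : ∀ l : L5, Integrable (fun v => ν₁₂ v * expA m₁ l v) ↔ l.2.2 < 0)
    (hass₂ : ∀ l : L5, Integrable (fun v => ν₂₁ v * expA m₂ l v) ↔ l.2.2 < 0)
    (hass₁' : ∀ l : L5, l.2.2 < 0 →
      Integrable (fun v => ν₁₂ v * (1 + nsq v) * expA m₁ l v))
    (hass₂' : ∀ l : L5, l.2.2 < 0 →
      Integrable (fun v => ν₂₁ v * (1 + nsq v) * expA m₂ l v))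
    (l : L6) (hl : l.2.2.2 < 0)
    (ξ : L6) (hξ : ‖ξ‖ = 1)
    (g₁ g₂ : V3 → ℝ) (hg₁meas : Measurable g₁) (hg₂meas : Measurable g₂)
    (hg₁0 : ∀ v, 0 ≤ g₁ v) (hg₂0 : ∀ v, 0 ≤ g₂ v)
    (hg₁ne : ¬ g₁ =ᵐ[volume] (fun _ => (0 : ℝ)))
    (hg₂ne : ¬ g₂ =ᵐ[volume] (fun _ => (0 : ℝ)))
    (hg₁int : Integrable (fun v => ν₁₂ v * (1 + nsq v) * g₁ v))
    (hg₂int : Integrable (fun v => ν₂₁ v * (1 + nsq v) * g₂ v)) :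
    ∃! s : ℝ,
      ((comp1 (l + s • ξ)).2.2 < 0 ∧ (comp2 (l + s • ξ)).2.2 < 0) ∧
      ∀ t : ℝ, (comp1 (l + t • ξ)).2.2 < 0 → (comp2 (l + t • ξ)).2.2 < 0 →
        zbar m₁ m₂ ν₁₂ ν₂₁ (l + s • ξ) (muBar m₁ m₂ ν₁₂ ν₂₁ g₁ g₂) ≤
          zbar m₁ m₂ ν₁₂ ν₂₁ (l + t • ξ) (muBar m₁ m₂ ν₁₂ ν₂₁ g₁ g₂) := by

  have hξ0 : ξ ≠ 0 := by
    intro h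
    rw [h] at hξ
    simp at hξ
  have hcomp : comp1 ξ ≠ 0 ∨ comp2 ξ ≠ 0 := comp_ne_zero ξ hξ0
  set ρ : L6 := muBar m₁ m₂ ν₁₂ ν₂₁ g₁ g₂ with hρ
  set A₁ : V3 → ℝ := fun v => dot5 (comp1 l) (aVec m₁ v) with hA₁
  set B₁ : V3 → ℝ := fun v => dot5 (comp1 ξ) (aVec m₁ v) with hB₁
  set A₂ : V3 → ℝ := fun v => dot5 (comp2 l) (aVec m₂ v) with hA₂
  set B₂ : V3 → ℝ := fun v => dot5 (comp2 ξ) (aVec m₂ v) with hB₂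
  set f : ℝ → ℝ := fun s => zbar m₁ m₂ ν₁₂ ν₂₁ (l + s • ξ) ρ with hf
  set D : Set ℝ := {s : ℝ | l.2.2.2 + s * ξ.2.2.2 < 0} with hD
  have hfeq : ∀ s, f s = (∫ v, ν₁₂ v * Real.exp (A₁ v + s * B₁ v))
      + (∫ v, ν₂₁ v * Real.exp (A₂ v + s * B₂ v)) - (s * dot6 ξ ρ + dot6 l ρ) := fun s =>
    zbar_eq m₁ m₂ ν₁₂ ν₂₁ l ξ ρ s
  have hD0 : (0:ℝ) ∈ D := by
    simp only [hD, Set.mem_setOf_eq]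
    simpa using hl
  have hDopen : IsOpen D := by
    have heq : D = (fun s : ℝ => l.2.2.2 + s * ξ.2.2.2) ⁻¹' Set.Iio 0 := rfl
    rw [heq]
    exact (by fun_prop : Continuous fun s : ℝ => l.2.2.2 + s * ξ.2.2.2).isOpen_preimage
      _ isOpen_Iio
  have hDconv : Convex ℝ D := by
    intro p hp q hq a b ha hb hab
    simp only [hD, Set.mem_setOf_eq] at hp hq ⊢
    simp only [smul_eq_mul]
    by_cases hA : a = 0
    · have hb1 : b = 1 := by linarith
      rw [hA, hb1]
      ring_nf
      ring_nf at hq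
      linarith
    · have ha' : 0 < a := lt_of_le_of_ne ha (Ne.symm hA)
      nlinarith [mul_pos ha' (neg_pos.mpr hp), mul_nonneg hb (neg_nonneg.mpr hq.le)]
  have hint₁ : ∀ s ∈ D, Integrable (fun v => ν₁₂ v * Real.exp (A₁ v + s * B₁ v)) := by
    intro s hs
    have h := (hass₁ (comp1 (l + s • ξ))).mpr (by rw [comp1_snd_snd]; exact hs)
    refine h.congr (Filter.Eventually.of_forall fun v => ?_)
    simp only [comp1_add_smul, expA_add_smul]
    rfl
  have hint₂ : ∀ s ∈ D, Integrable (fun v => ν₂₁ v * Real.exp (A₂ v + s * B₂ v)) := by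
    intro s hs
    have h := (hass₂ (comp2 (l + s • ξ))).mpr (by rw [comp2_snd_snd]; exact hs)
    refine h.congr (Filter.Eventually.of_forall fun v => ?_)
    simp only [comp2_add_smul, expA_add_smul]
    rfl
  -- strict convexity
  have hSC : StrictConvexOn ℝ D f := by
    refine ⟨hDconv, ?_⟩
    intro x hx y hy hxy a b ha hb hab
    have hb' : b = 1 - a := by linarith
    have ha1 : a < 1 := by linarith
    have hz : a * x + (1 - a) * y ∈ D := by
      have := hDconv hx hy ha.le hb.le hab
      simpa [hb', smul_eq_mul] using this
    have hs₁ := species_convex ν₁₂ A₁ B₁ hν₁₂pos ha ha1 (hint₁ x hx) (hint₁ y hy)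
      (hint₁ _ hz)
    have hs₂ := species_convex ν₂₁ A₂ B₂ hν₂₁pos ha ha1 (hint₂ x hx) (hint₂ y hy)
      (hint₂ _ hz)
    simp only [smul_eq_mul, hb']
    rw [hfeq, hfeq, hfeq]
    have hlin : (a * x + (1 - a) * y) * dot6 ξ ρ + dot6 l ρ
        = a * (x * dot6 ξ ρ + dot6 l ρ) + (1 - a) * (y * dot6 ξ ρ + dot6 l ρ) := by ring
    rcases hcomp with hc1 | hc2
    · have hstrict := hs₁.2 hxy (dot5_zero_null (comp1 ξ) hc1 m₁ hm₁)
      have hle := hs₂.1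
      linarith
    · have hstrict := hs₂.2 hxy (dot5_zero_null (comp2 ξ) hc2 m₂ hm₂)
      have hle := hs₁.1
      linarith
  have hcont : ContinuousOn f D := hSC.convexOn.continuousOn hDopen
  -- barriers
  obtain ⟨b, hb0, hbD, hbgt⟩ := right_barrier m₁ m₂ hm₁ hm₂ ν₁₂ ν₂₁ hν₁₂meas hν₂₁meas
    hν₁₂pos hν₂₁pos hass₁ hass₂ l hl ξ hcomp g₁ g₂ hg₁meas hg₂meas hg₁0 hg₂0 hg₁ne hg₂ne
    hg₁int hg₂int
  have hcomp' : comp1 (-ξ) ≠ 0 ∨ comp2 (-ξ) ≠ 0 := by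
    rcases hcomp with h | h
    · left
      have : comp1 (-ξ) = -(comp1 ξ) := rfl
      rw [this]
      exact neg_ne_zero.mpr h
    · right
      have : comp2 (-ξ) = -(comp2 ξ) := rfl
      rw [this]
      exact neg_ne_zero.mpr h
  obtain ⟨a', ha'0, ha'D, ha'gt⟩ := right_barrier m₁ m₂ hm₁ hm₂ ν₁₂ ν₂₁ hν₁₂meas hν₂₁meas
    hν₁₂pos hν₂₁pos hass₁ hass₂ l hl (-ξ) hcomp' g₁ g₂ hg₁meas hg₂meas hg₁0 hg₂0 hg₁ne hg₂ne
    hg₁int hg₂int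
  have hnegcoord : (-ξ).2.2.2 = -ξ.2.2.2 := rfl
  set av : ℝ := -a' with hav
  have haD : av ∈ D := by
    simp only [hD, Set.mem_setOf_eq]
    rw [hnegcoord] at ha'D
    rw [hav]; linarith [ha'D]
  have ha0 : av < 0 := by rw [hav]; linarith
  have hbD' : b ∈ D := hbD
  have hzsm : ∀ s : ℝ, l + s • (-ξ) = l + (-s) • ξ := by
    intro s
    rw [smul_neg, ← neg_smul]
  have hz0 : l + (0:ℝ) • (-ξ) = l + (0:ℝ) • ξ := by
    simp
  have hagt : ∀ s ∈ D, s < av → f 0 < f s := by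
    intro s hs hsa
    have hcond : l.2.2.2 + (-s) * (-ξ).2.2.2 < 0 := by
      rw [hnegcoord]
      simp only [hD, Set.mem_setOf_eq] at hs
      linarith [hs]
    have hblt : a' < -s := by rw [hav] at hsa; linarith
    have := ha'gt (-s) hcond hblt
    rw [hz0, hzsm (-s), neg_neg] at this
    exact this
  have hbgt' : ∀ s ∈ D, b < s → f 0 < f s := by
    intro s hs hbs
    exact hbgt s hs hbs
  -- compact minimization
  have hIcc : Set.Icc av b ⊆ D := hDconv.ordConnected.out haD hbD'
  have h0mem : (0:ℝ) ∈ Set.Icc av b := ⟨ha0.le, hb0.le⟩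
  obtain ⟨s₀, hs₀mem, hs₀min⟩ := isCompact_Icc.exists_isMinOn ⟨0, h0mem⟩ (hcont.mono hIcc)
  have hs₀D : s₀ ∈ D := hIcc hs₀mem
  have hminIcc : ∀ t ∈ Set.Icc av b, f s₀ ≤ f t := fun t ht => hs₀min ht
  have hglobal : ∀ t ∈ D, f s₀ ≤ f t := by
    intro t ht
    by_cases htK : t ∈ Set.Icc av b
    · exact hminIcc t htK
    · rw [Set.mem_Icc] at htK
      push_neg at htK
      have hf0t : f 0 < f t := by
        rcases lt_or_ge t av with h | h
        · exact hagt t ht h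
        · exact hbgt' t ht (htK h)
      exact le_trans (hminIcc 0 h0mem) hf0t.le
  refine ⟨s₀, ⟨⟨?_, ?_⟩, ?_⟩, ?_⟩
  · rw [comp1_snd_snd]; exact hs₀D
  · rw [comp2_snd_snd]; exact hs₀D
  · intro t ht1 _
    rw [comp1_snd_snd] at ht1
    exact hglobal t ht1
  · rintro s' ⟨⟨h1, _⟩, hmin'⟩
    rw [comp1_snd_snd] at h1
    have hM0 : IsMinOn f D s₀ := isMinOn_iff.mpr hglobal
    have hM1 : IsMinOn f D s' := isMinOn_iff.mpr fun t ht =>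
      hmin' t (by rw [comp1_snd_snd]; exact ht) (by rw [comp2_snd_snd]; exact ht)
    exact hSC.eq_of_isMinOn hM1 hM0 h1 hs₀D
end
end
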